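/- arXiv:1908.07350 — 5 statements merged into one kernel-verified Lean document; each statement's English description precedes it below -/
import Mathlib

section
/- Let f be a Schwarz function on the unit disk with Taylor expansion f(z) = ∑_{n≥1} c_n z^n. If |c_n| = 1 for some n ≥ 1, then f(z) = e^{iθ} z^n for some real θ. -/
open Metric MeasureTheory Set
open scoped Real ComplexConjugate

noncomputable section SchwarzAux

local instance : Fact (0 < 2 * π) := ⟨Real.two_pi_pos⟩

private lemma schwarz_my_integrable {E : Type*} [NormedAddCommGroup E]
    {g : AddCircle (2 * π) → E} (hg : Continuous g) :
    Integrable g (AddCircle.haarAddCircle (T := 2 * π)) := by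
  exact hg.integrable_of_hasCompactSupport
    (IsCompact.of_isClosed_subset isCompact_univ (isClosed_tsupport g) (Set.subset_univ _))

private lemma schwarz_summable_aux {c : ℕ → ℂ} {r : ℝ} (hr0 : 0 ≤ r) (hr1 : r < 1)
    (h : ∀ z ∈ ball (0 : ℂ) 1, Summable fun m : ℕ => c m * z ^ m) :
    Summable fun m : ℕ => ‖c m‖ * r ^ m := by
  set r' : ℝ := (r + 1) / 2 with hr'def
  have hrr' : r < r' := by rw [hr'def]; linarith
  have hr'0 : 0 < r' := by rw [hr'def]; linarith
  have hr'1 : r' < 1 := by rw [hr'def]; linarith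
  have hz : ((r' : ℂ)) ∈ ball (0 : ℂ) 1 := by
    rw [mem_ball_zero_iff, Complex.norm_real, Real.norm_eq_abs, abs_of_pos hr'0]
    exact hr'1
  have hs := h _ hz
  obtain ⟨C, hC⟩ := hs.tendsto_atTop_zero.norm.bddAbove_range
  have hC' : ∀ m : ℕ, ‖c m‖ * r' ^ m ≤ C := by
    intro m
    have := hC ⟨m, rfl⟩
    simpa [norm_mul, norm_pow, Complex.norm_real, abs_of_pos hr'0] using this
  have hρ0 : 0 ≤ r / r' := div_nonneg hr0 hr'0.le
  have hρ1 : r / r' < 1 := (div_lt_one hr'0).mpr hrr'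
  refine Summable.of_nonneg_of_le (fun m => by positivity) (fun m => ?_)
    ((summable_geometric_of_lt_one hρ0 hρ1).mul_left C)
  have hrpow : r ^ m = r' ^ m * (r / r') ^ m := by
    rw [← mul_pow, mul_div_cancel₀ _ hr'0.ne']
  rw [hrpow, ← mul_assoc]
  exact mul_le_mul_of_nonneg_right (hC' m) (by positivity)

private lemma schwarz_fourier_nat_pow (m : ℕ) (x : AddCircle (2 * π)) :
    (fourier (m : ℤ) x : ℂ) = (AddCircle.toCircle x : ℂ) ^ m := by
  induction m with
  | zero => simpa using (fourier_zero (T := 2 * π) (x := x))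
  | succ k ih =>
    have h : ((k + 1 : ℕ) : ℤ) = (k : ℤ) + 1 := by push_cast; ring
    rw [h, fourier_add, ih, fourier_one, pow_succ]

/-- Key per-radius Parseval bound for two coefficients. -/
private lemma schwarz_key_bound (f : ℂ → ℂ) (c : ℕ → ℂ)
    (hd : DifferentiableOn ℂ f (ball (0 : ℂ) 1))
    (hsum : ∀ z ∈ ball (0 : ℂ) 1, HasSum (fun n : ℕ => c n * z ^ n) (f z))
    (hbd : ∀ z ∈ ball (0 : ℂ) 1, ‖f z‖ < 1)
    (k l : ℕ) (hkl : k ≠ l) {r : ℝ} (hr0 : 0 < r) (hr1 : r < 1) :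
    ‖c k‖ ^ 2 * (r ^ k) ^ 2 + ‖c l‖ ^ 2 * (r ^ l) ^ 2 ≤ 1 := by
  haveI : Fact (0 < 2 * π) := ⟨Real.two_pi_pos⟩
  set μ := AddCircle.haarAddCircle (T := 2 * π) with hμ
  set Z : AddCircle (2 * π) → ℂ := fun x => (r : ℂ) * (AddCircle.toCircle x : ℂ) with hZ
  have hZc : Continuous Z :=
    continuous_const.mul (continuous_induced_dom.comp AddCircle.continuous_toCircle)
  have hZb : ∀ x, Z x ∈ ball (0 : ℂ) 1 := by
    intro x
    rw [mem_ball_zero_iff, hZ]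
    simp only [norm_mul, Complex.norm_real, Real.norm_eq_abs, abs_of_pos hr0]
    calc r * ‖(AddCircle.toCircle x : ℂ)‖ = r * 1 := by
          rw [Circle.norm_coe]
      _ < 1 := by rw [mul_one]; exact hr1
  set φ : C(AddCircle (2 * π), ℂ) :=
    ⟨fun x => f (Z x), hd.continuousOn.comp_continuous hZc hZb⟩ with hφdef
  have hφ : ∀ x, HasSum (fun m : ℕ => (c m * (r : ℂ) ^ m) * (fourier (m : ℤ) x)) (φ x) := by
    intro x
    have h1 := hsum (Z x) (hZb x)
    have h2 : ∀ m : ℕ, c m * (Z x) ^ m = (c m * (r : ℂ) ^ m) * (fourier (m : ℤ) x) := by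
      intro m
      rw [schwarz_fourier_nat_pow, hZ]
      simp only [mul_pow]
      ring
    rw [funext h2] at h1
    exact h1
  -- Fourier coefficient computation
  have hcoeff : ∀ j : ℕ, fourierCoeff (⇑φ) (j : ℤ) = c j * (r : ℂ) ^ j := by
    intro j
    set F : ℕ → AddCircle (2 * π) → ℂ :=
      fun m x => fourier (-(j : ℤ)) x * ((c m * (r : ℂ) ^ m) * (fourier (m : ℤ) x)) with hF
    have hFs : ∀ x, HasSum (fun m => F m x) (fourier (-(j : ℤ)) x * φ x) :=
      fun x => (hφ x).mul_left _
    have hFi : ∀ m, Integrable (F m) μ := by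
      intro m
      exact schwarz_my_integrable
        ((fourier (-(j : ℤ))).continuous.mul (continuous_const.mul (fourier (m : ℤ)).continuous))
    have hFnorm : ∀ m x, ‖F m x‖ = ‖c m‖ * r ^ m := by
      intro m x
      rw [hF]
      simp only [norm_mul, norm_pow, Complex.norm_real, Real.norm_eq_abs,
        abs_of_pos hr0, Circle.norm_coe, fourier_apply]
      ring
    have hFsum : Summable fun m => ∫ x, ‖F m x‖ ∂μ := by
      have he : (fun m => ∫ x, ‖F m x‖ ∂μ) = fun m : ℕ => ‖c m‖ * r ^ m := by
        funext m
        simp only [hFnorm]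
        rw [integral_const]
        simp [hμ]
      rw [he]
      exact schwarz_summable_aux hr0.le hr1 (fun z hz => (hsum z hz).summable)
    have h1 := MeasureTheory.hasSum_integral_of_summable_integral_norm hFi hFsum
    have h2 : (fun x => ∑' m, F m x) = fun x => fourier (-(j : ℤ)) x * φ x :=
      funext fun x => (hFs x).tsum_eq
    have h3 : fourierCoeff (⇑φ) (j : ℤ) = ∫ x, fourier (-(j : ℤ)) x * φ x ∂μ := by
      simp only [fourierCoeff, smul_eq_mul, hμ]
    have h4 : ∀ m : ℕ, (∫ x, F m x ∂μ) =
        (c m * (r : ℂ) ^ m) * (if (j : ℤ) = (m : ℤ) then 1 else 0) := by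
      intro m
      have he : ∀ x, F m x = (c m * (r : ℂ) ^ m) * (fourier (-(j : ℤ)) x * fourier (m : ℤ) x) := by
        intro x; rw [hF]; ring
      calc (∫ x, F m x ∂μ)
          = ∫ x, (c m * (r : ℂ) ^ m) * (fourier (-(j : ℤ)) x * fourier (m : ℤ) x) ∂μ := by
            simp only [he]
        _ = (c m * (r : ℂ) ^ m) * ∫ x, fourier (-(j : ℤ)) x * fourier (m : ℤ) x ∂μ := by
            rw [integral_const_mul]
        _ = (c m * (r : ℂ) ^ m) * (if (j : ℤ) = (m : ℤ) then 1 else 0) := by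
            congr 1
            have h5 := ContinuousMap.inner_toLp (𝕜 := ℂ) μ (fourier (j : ℤ)) (fourier (m : ℤ))
            have h6 := orthonormal_iff_ite.mp (orthonormal_fourier (T := 2 * π)) (j : ℤ) (m : ℤ)
            have h7 : (∫ x, fourier (-(j : ℤ)) x * fourier (m : ℤ) x ∂μ)
                = ∫ x, fourier (m : ℤ) x * (starRingEnd ℂ) (fourier (j : ℤ) x) ∂μ := by
              apply integral_congr_ae
              filter_upwards with x
              rw [fourier_neg, mul_comm]
            rw [h7, ← h5]
            exact h6
    rw [h2, ← h3] at h1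
    have h7 : (fun m : ℕ => ∫ x, F m x ∂μ) =
        fun m : ℕ => if m = j then c j * (r : ℂ) ^ j else 0 := by
      funext m
      rw [h4 m]
      by_cases h : m = j
      · subst h; simp
      · have : (j : ℤ) ≠ (m : ℤ) := by exact_mod_cast Ne.symm h
        simp [h, this]
    rw [h7] at h1
    exact h1.unique (hasSum_ite_eq j _)
  -- Parseval
  set Φ := ContinuousMap.toLp (E := ℂ) 2 μ ℂ φ with hΦdef
  have hpar := tsum_sq_fourierCoeff (T := 2 * π) Φ
  have hΦae : ⇑Φ =ᵐ[μ] ⇑φ := ContinuousMap.coeFn_toLp _ _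
  have hRHS : (∫ t, ‖Φ t‖ ^ 2 ∂μ) ≤ 1 := by
    have he : (∫ t, ‖Φ t‖ ^ 2 ∂μ) = ∫ t, ‖φ t‖ ^ 2 ∂μ := by
      apply integral_congr_ae
      filter_upwards [hΦae] with t ht
      rw [ht]
    rw [he]
    have hint : Integrable (fun t => ‖φ t‖ ^ 2) μ :=
      schwarz_my_integrable ((φ.continuous.norm.pow 2))
    calc (∫ t, ‖φ t‖ ^ 2 ∂μ) ≤ ∫ _, (1 : ℝ) ∂μ := by
          apply integral_mono hint (integrable_const _)
          intro t
          have hb := hbd (Z t) (hZb t)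
          show ‖φ t‖ ^ 2 ≤ 1
          exact pow_le_one₀ (norm_nonneg _) (le_of_lt hb)
      _ = 1 := by simp [hμ]
  have hsumm : Summable fun i : ℤ => ‖fourierCoeff (⇑Φ) i‖ ^ 2 := by
    have hm := (lp.memℓp (fourierBasis.repr Φ)).summable
      (by norm_num : 0 < (2 : ENNReal).toReal)
    have he : (fun i : ℤ => ‖fourierBasis.repr Φ i‖ ^ (2 : ENNReal).toReal) =
        fun i : ℤ => ‖fourierCoeff (⇑Φ) i‖ ^ 2 := by
      funext i
      rw [fourierBasis_repr]
      have : ((2 : ENNReal).toReal) = ((2 : ℕ) : ℝ) := by norm_num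
      rw [this, Real.rpow_natCast]
    rwa [he] at hm
  have hfin := Summable.sum_le_tsum ({(k : ℤ), (l : ℤ)} : Finset ℤ)
    (fun i _ => by positivity) hsumm
  rw [Finset.sum_pair (by exact_mod_cast hkl : (k : ℤ) ≠ (l : ℤ))] at hfin
  have hk' : fourierCoeff (⇑Φ) (k : ℤ) = c k * (r : ℂ) ^ k := by
    rw [hΦdef, fourierCoeff_toLp]; exact hcoeff k
  have hl' : fourierCoeff (⇑Φ) (l : ℤ) = c l * (r : ℂ) ^ l := by
    rw [hΦdef, fourierCoeff_toLp]; exact hcoeff l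
  rw [hk', hl'] at hfin
  have hnorm : ∀ m : ℕ, ‖c m * (r : ℂ) ^ m‖ ^ 2 = ‖c m‖ ^ 2 * (r ^ m) ^ 2 := by
    intro m
    rw [norm_mul, norm_pow, Complex.norm_real, Real.norm_eq_abs, abs_of_pos hr0, mul_pow]
  rw [hnorm k, hnorm l] at hfin
  calc ‖c k‖ ^ 2 * (r ^ k) ^ 2 + ‖c l‖ ^ 2 * (r ^ l) ^ 2
      ≤ ∑' i : ℤ, ‖fourierCoeff (⇑Φ) i‖ ^ 2 := hfin
    _ = ∫ t, ‖Φ t‖ ^ 2 ∂μ := hpar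
    _ ≤ 1 := hRHS

end SchwarzAux

/-- If a Schwarz function `f` on the unit disk has some Taylor coefficient of modulus one,
`‖c n‖ = 1` for some `n ≥ 1`, then `f z = exp (θ * I) * z ^ n` for some real `θ`. -/
theorem schwarz_coeff_eq_one (f : ℂ → ℂ) (c : ℕ → ℂ)
    (hd : DifferentiableOn ℂ f (ball (0 : ℂ) 1))
    (hsum : ∀ z ∈ ball (0 : ℂ) 1, HasSum (fun n : ℕ => c n * z ^ n) (f z))
    (hf0 : f 0 = 0)
    (hbd : ∀ z ∈ ball (0 : ℂ) 1, ‖f z‖ < 1)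
    (n : ℕ) (hn : 1 ≤ n) (hcn : ‖c n‖ = 1) :
    ∃ θ : ℝ, ∀ z ∈ ball (0 : ℂ) 1, f z = Complex.exp (θ * Complex.I) * z ^ n := by
  -- all other coefficients vanish
  have hzero : ∀ k : ℕ, k ≠ n → c k = 0 := by
    intro k hk
    have hle : ‖c k‖ ^ 2 + ‖c n‖ ^ 2 ≤ 1 := by
      have hlim : Filter.Tendsto
          (fun r : ℝ => ‖c k‖ ^ 2 * (r ^ k) ^ 2 + ‖c n‖ ^ 2 * (r ^ n) ^ 2)
          (nhdsWithin 1 (Set.Iio 1)) (nhds (‖c k‖ ^ 2 + ‖c n‖ ^ 2)) := by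
        apply Filter.Tendsto.mono_left _ nhdsWithin_le_nhds
        have hc : Continuous
            (fun r : ℝ => ‖c k‖ ^ 2 * (r ^ k) ^ 2 + ‖c n‖ ^ 2 * (r ^ n) ^ 2) := by continuity
        have hct := hc.tendsto 1
        simpa using hct
      refine le_of_tendsto hlim ?_
      filter_upwards [Ioo_mem_nhdsLT_of_mem (⟨zero_lt_one, le_refl (1:ℝ)⟩ : (1:ℝ) ∈ Set.Ioc 0 1)]
        with r hr
      exact schwarz_key_bound f c hd hsum hbd k n hk hr.1 hr.2
    have h1 : ‖c k‖ ^ 2 ≤ 0 := by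
      rw [hcn] at hle; nlinarith
    have h2 : ‖c k‖ = 0 := by nlinarith [norm_nonneg (c k), sq_nonneg (‖c k‖)]
    exact norm_eq_zero.mp h2
  refine ⟨(c n).arg, fun z hz => ?_⟩
  have h1 := hsum z hz
  have h2 : (fun m : ℕ => c m * z ^ m) = fun m : ℕ => if m = n then c n * z ^ n else 0 := by
    funext m
    by_cases h : m = n
    · subst h; simp
    · simp [hzero m h, h]
  rw [h2] at h1
  have h3 : f z = c n * z ^ n := h1.unique (hasSum_ite_eq n _)
  have h4 : Complex.exp (((c n).arg : ℂ) * Complex.I) = c n := by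
    have h := Complex.norm_mul_exp_arg_mul_I (c n)
    rw [hcn] at h
    simpa using h
  rw [h3, h4]
end

section
/- Under the hypotheses of the class H_Σ(τ,λ,δ;φ), comparing third coefficients gives ((1+2λ+6δ)/τ)a₃ = B₁c₂ + B₂c₁² and ((1+2λ+6δ)/τ)(2a₂² − a₃) = B₁d₂ + B₂d₁²; subtracting and using a₂ = B₁c₁τ/(1+λ+2δ) yields a₃ = B₁²c₁²τ²/(1+λ+2δ)² + B₁τ(c₂ − d₂)/(2(1+2λ+6δ)). -/
open Metric FormalMultilinearSeries

lemma myOfScalars_coeff (e : ℕ → ℂ) (n : ℕ) : (ofScalars ℂ e).coeff n = e n := by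
  have := ofScalars_apply_eq (E := ℂ) e 1 n
  rw [FormalMultilinearSeries.coeff]
  rw [show (1 : Fin n → ℂ) = fun _ => (1:ℂ) from rfl, this]
  simp

lemma hasFPS_of_hasSum {F : ℂ → ℂ} {e : ℕ → ℂ}
    (h : ∀ z ∈ ball (0:ℂ) 1, HasSum (fun n => e n * z ^ n) (F z)) :
    HasFPowerSeriesOnBall F (ofScalars ℂ e) 0 1 := by
  constructor
  · refine ENNReal.le_of_forall_nnreal_lt (fun r hr => ?_)
    apply FormalMultilinearSeries.le_radius_of_summable
    have hz : (r : ℂ) ∈ ball (0:ℂ) 1 := by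
      simp only [mem_ball, dist_zero_right]
      simpa using (by exact_mod_cast hr : (r:ℝ) < 1)
    have := ((h _ hz).summable).norm
    simp only [norm_mul, norm_pow, Complex.norm_real] at this ⊢
    simpa [ofScalars_norm, myOfScalars_coeff, Complex.norm_natCast] using this
  · exact one_pos
  · intro y hy
    have hy' : y ∈ ball (0:ℂ) 1 := by
      simp only [Metric.mem_eball, edist_zero_right] at hy
      simp only [mem_ball, dist_zero_right]
      rwa [← ENNReal.coe_one, enorm_lt_coe, ← NNReal.coe_lt_coe, coe_nnnorm] at hy
    simpa [ofScalars_apply_eq, smul_eq_mul, mul_comm, zero_add, myOfScalars_coeff] using h y hy'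

lemma coeff_eq_iteratedDeriv {F : ℂ → ℂ} {e : ℕ → ℂ}
    (h : HasFPowerSeriesOnBall F (ofScalars ℂ e) 0 1) (n : ℕ) :
    (n.factorial : ℂ) * e n = iteratedDeriv n F 0 := by
  have := h.factorial_smul (1 : ℂ) n
  rw [iteratedDeriv] at *
  simp only [apply_eq_pow_smul_coeff, myOfScalars_coeff, one_pow, one_smul, nsmul_eq_mul] at this
  exact_mod_cast this

lemma hasSum_deriv {F : ℂ → ℂ} {e : ℕ → ℂ}
    (h : ∀ z ∈ ball (0:ℂ) 1, HasSum (fun n => e n * z ^ n) (F z)) :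
    ∀ z ∈ ball (0:ℂ) 1, HasSum (fun n : ℕ => ((n : ℂ) + 1) * e (n + 1) * z ^ n) (deriv F z) := by
  intro z hz
  have hp := hasFPS_of_hasSum h
  rcases eq_or_ne z 0 with rfl | hne
  · have h1 : deriv F 0 = e 1 := by
      have := coeff_eq_iteratedDeriv hp 1
      simpa [iteratedDeriv_one] using this.symm
    rw [h1]
    have hterm : ∀ b : ℕ, b ≠ 0 → ((b:ℂ)+1) * e (b+1) * (0:ℂ)^b = 0 := fun b hb => by
      simp [zero_pow hb]
    simpa using hasSum_single (f := fun n : ℕ => ((n:ℂ)+1) * e (n+1) * (0:ℂ)^n) 0 hterm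
  · have hz' : z ∈ Metric.eball (0:ℂ) 1 := by
      simp only [mem_ball, dist_zero_right] at hz
      simp only [Metric.mem_eball, edist_zero_right]
      rw [← ENNReal.coe_one, enorm_lt_coe, ← NNReal.coe_lt_coe, coe_nnnorm]
      exact hz
    have hd := (hp.fderiv).hasSum hz'
    rw [zero_add] at hd
    have hd2 := (ContinuousLinearMap.apply ℂ ℂ z).hasSum hd
    simp only [ContinuousLinearMap.apply_apply] at hd2
    have heq : ∀ n : ℕ, ((ofScalars ℂ e).derivSeries n (fun _ => z)) z
        = z * (((n:ℂ)+1) * e (n+1) * z ^ n) := by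
      intro n
      rw [FormalMultilinearSeries.derivSeries_apply_diag]
      simp only [apply_eq_pow_smul_coeff, myOfScalars_coeff, smul_eq_mul, nsmul_eq_mul]
      push_cast
      ring
    rw [funext heq] at hd2
    have hval : fderiv ℂ F z z = z * deriv F z := by
      calc fderiv ℂ F z z = fderiv ℂ F z (z • (1:ℂ)) := by norm_num
        _ = z • fderiv ℂ F z 1 := map_smul _ _ _
        _ = z * deriv F z := by rw [fderiv_apply_one_eq_deriv, smul_eq_mul]
    rw [hval] at hd2
    have h3 := hd2.mul_left z⁻¹
    have hfun : (fun i : ℕ => z⁻¹ * (z * (((i:ℂ)+1) * e (i+1) * z^i)))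
        = fun i : ℕ => ((i:ℂ)+1) * e (i+1) * z^i := by
      funext i; field_simp
    have hvv : z⁻¹ * (z * deriv F z) = deriv F z := by field_simp
    rw [hfun, hvv] at h3
    exact h3

lemma val_at_zero {F : ℂ → ℂ} {e : ℕ → ℂ}
    (h : ∀ z ∈ ball (0:ℂ) 1, HasSum (fun n => e n * z ^ n) (F z)) : F 0 = e 0 := by
  have := coeff_eq_iteratedDeriv (hasFPS_of_hasSum h) 0
  simpa [iteratedDeriv_zero] using this.symm

lemma deriv_at_zero {F : ℂ → ℂ} {e : ℕ → ℂ}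
    (h : ∀ z ∈ ball (0:ℂ) 1, HasSum (fun n => e n * z ^ n) (F z)) : deriv F 0 = e 1 := by
  have := coeff_eq_iteratedDeriv (hasFPS_of_hasSum h) 1
  simpa [iteratedDeriv_one] using this.symm

lemma deriv2_at_zero {F : ℂ → ℂ} {e : ℕ → ℂ}
    (h : ∀ z ∈ ball (0:ℂ) 1, HasSum (fun n => e n * z ^ n) (F z)) :
    deriv (deriv F) 0 = 2 * e 2 := by
  have h1 := hasSum_deriv h
  have := deriv_at_zero h1
  rw [this]; push_cast; ring

lemma diffAt_of_hasSum {F : ℂ → ℂ} {e : ℕ → ℂ}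
    (h : ∀ z ∈ ball (0:ℂ) 1, HasSum (fun n => e n * z ^ n) (F z)) :
    ∀ z ∈ ball (0:ℂ) 1, DifferentiableAt ℂ F z := by
  intro z hz
  have hp := hasFPS_of_hasSum h
  have hz' : z ∈ Metric.eball (0:ℂ) 1 := by
    simp only [mem_ball, dist_zero_right] at hz
    simp only [Metric.mem_eball, edist_zero_right]
    rw [← ENNReal.coe_one, enorm_lt_coe, ← NNReal.coe_lt_coe, coe_nnnorm]
    exact hz
  exact (hp.analyticOnNhd z hz').differentiableAt

lemma side_lemma (f u φf : ℂ → ℂ) (a c B' : ℕ → ℂ) (lamc delc τ : ℂ) (hτ : τ ≠ 0)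
    (hB0 : B' 0 = 1)
    (hfs : ∀ z ∈ ball (0:ℂ) 1, HasSum (fun n : ℕ => a n * z ^ n) (f z))
    (ha0 : a 0 = 0) (ha1 : a 1 = 1)
    (hus : ∀ z ∈ ball (0:ℂ) 1, HasSum (fun n : ℕ => c n * z ^ n) (u z))
    (hc0 : c 0 = 0)
    (hubd : ∀ z ∈ ball (0:ℂ) 1, ‖u z‖ < 1)
    (hφs : ∀ z ∈ ball (0:ℂ) 1, HasSum (fun n : ℕ => B' n * z ^ n) (φf z))
    (hsub : ∀ z ∈ ball (0:ℂ) 1, z ≠ 0 →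
      1 + (1 / τ) * ((1 - lamc) * (f z / z) + lamc * deriv f z +
        delc * z * deriv (deriv f) z - 1) = φf (u z)) :
    ((1 + lamc + 2 * delc) / τ) * a 2 = B' 1 * c 1 ∧
    ((1 + 2 * lamc + 6 * delc) / τ) * a 3 = B' 1 * c 2 + B' 2 * c 1 ^ 2 := by
  have h0ball : (0:ℂ) ∈ ball (0:ℂ) 1 := by simp
  have hmem : ∀ w : ℂ, ‖w‖ < 1 → w ∈ ball (0:ℂ) 1 := by
    intro w hw; simpa [mem_ball, dist_zero_right] using hw
  have hu0 : u 0 = 0 := by rw [val_at_zero hus, hc0]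
  have hφ0 : φf 0 = 1 := by rw [val_at_zero hφs, hB0]
  set e : ℕ → ℂ := fun n =>
    (1/τ) * ((1 - lamc) + lamc * ((n:ℂ)+1) + delc * (n:ℂ) * ((n:ℂ)+1)) * a (n+1)
      + (if n = 0 then (1 - 1/τ) else 0) with he
  -- the key HasSum statement
  have hE : ∀ z ∈ ball (0:ℂ) 1, HasSum (fun n => e n * z ^ n) (φf (u z)) := by
    intro z hz
    rcases eq_or_ne z 0 with rfl | hne
    · rw [hu0, hφ0]
      have hterm : ∀ b : ℕ, b ≠ 0 → e b * (0:ℂ)^b = 0 := fun b hb => by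
        simp [zero_pow hb]
      have h00 := hasSum_single (f := fun n : ℕ => e n * (0:ℂ)^n) 0 hterm
      have he0 : e 0 = 1 := by
        simp only [he, Nat.cast_zero, if_pos rfl, ha1, ↓reduceIte]
        field_simp
        ring
      simpa [he0] using h00
    · -- series for f z / z
      have S1 : HasSum (fun n : ℕ => a (n+1) * z ^ n) (f z / z) := by
        have h0 := (hasSum_nat_add_iff' (f := fun n : ℕ => a n * z ^ n) 1).2 (hfs z hz)
        simp only [Finset.range_one, Finset.sum_singleton, ha0, zero_mul, sub_zero] at h0
        have := h0.mul_left z⁻¹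
        have hfun : (fun n : ℕ => z⁻¹ * (a (n+1) * z ^ (n+1)))
            = fun n : ℕ => a (n+1) * z ^ n := by
          funext n; rw [pow_succ]; field_simp
        rw [hfun] at this
        rwa [div_eq_inv_mul]
      have S2 := hasSum_deriv hfs z hz
      have S2' := hasSum_deriv (hasSum_deriv hfs) z hz
      -- series for z * f'' z
      have S3 : HasSum (fun n : ℕ => (n:ℂ) * ((n:ℂ)+1) * a (n+1) * z ^ n)
          (z * deriv (deriv f) z) := by
        have h1 := S2'.mul_left z
        have hfun : (fun n : ℕ => z * (((n:ℂ)+1) * ((((n+1:ℕ):ℂ)+1) * a (n+1+1)) * z ^ n))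
            = fun n : ℕ => (((n+1:ℕ):ℂ)) * (((n+1:ℕ):ℂ)+1) * a ((n+1)+1) * z ^ (n+1) := by
          funext n; push_cast; ring
        rw [hfun] at h1
        apply (hasSum_nat_add_iff'
          (f := fun n : ℕ => (n:ℂ) * ((n:ℂ)+1) * a (n+1) * z ^ n) 1).1
        simpa using h1
      have S4 : HasSum (fun n : ℕ => if n = 0 then (1 - 1/τ) else 0) (1 - 1/τ) :=
        hasSum_ite_eq 0 (1 - 1/τ)
      have hTot := (((S1.mul_left ((1/τ)*(1-lamc))).add (S2.mul_left ((1/τ)*lamc))).add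
        (S3.mul_left ((1/τ)*delc))).add S4
      have hfun : (fun n : ℕ => (1/τ)*(1-lamc) * (a (n+1) * z ^ n)
            + (1/τ)*lamc * (((n:ℂ)+1) * a (n+1) * z ^ n)
            + (1/τ)*delc * ((n:ℂ) * ((n:ℂ)+1) * a (n+1) * z ^ n)
            + (if n = 0 then (1 - 1/τ) else 0))
          = fun n : ℕ => e n * z ^ n := by
        funext n
        rcases n with _ | m
        · simp only [he, Nat.cast_zero, if_pos rfl, pow_zero]; ring
        · simp only [he, if_neg (Nat.succ_ne_zero m), add_zero]; push_cast; ring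
      rw [hfun] at hTot
      have hval : (1/τ)*(1-lamc) * (f z / z) + (1/τ)*lamc * deriv f z
          + (1/τ)*delc * (z * deriv (deriv f) z) + (1 - 1/τ) = φf (u z) := by
        rw [← hsub z hz hne]; ring
      rwa [hval] at hTot
  -- coefficients of the composite
  have ce1 : deriv (fun z => φf (u z)) 0 = e 1 := deriv_at_zero hE
  have ce2 : deriv (deriv (fun z => φf (u z))) 0 = 2 * e 2 := deriv2_at_zero hE
  -- derivative values of u and φf at 0
  have du0 : deriv u 0 = c 1 := deriv_at_zero hus
  have ddu0 : deriv (deriv u) 0 = 2 * c 2 := deriv2_at_zero hus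
  have dφ0 : deriv φf 0 = B' 1 := deriv_at_zero hφs
  have ddφ0 : deriv (deriv φf) 0 = 2 * B' 2 := deriv2_at_zero hφs
  -- differentiability
  have hud : ∀ z ∈ ball (0:ℂ) 1, DifferentiableAt ℂ u z := diffAt_of_hasSum hus
  have hφd : ∀ w ∈ ball (0:ℂ) 1, DifferentiableAt ℂ φf w := diffAt_of_hasSum hφs
  have hu'd : ∀ z ∈ ball (0:ℂ) 1, DifferentiableAt ℂ (deriv u) z :=
    diffAt_of_hasSum (hasSum_deriv hus)
  have hφ'd : ∀ w ∈ ball (0:ℂ) 1, DifferentiableAt ℂ (deriv φf) w :=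
    diffAt_of_hasSum (hasSum_deriv hφs)
  -- chain rule on the ball
  have hder : ∀ z ∈ ball (0:ℂ) 1,
      deriv (fun z => φf (u z)) z = deriv φf (u z) * deriv u z := by
    intro z hz
    exact deriv_comp z (hφd _ (hmem _ (hubd z hz))) (hud z hz)
  -- first relation
  have rel1 : e 1 = B' 1 * c 1 := by
    rw [← ce1, hder 0 h0ball, hu0, dφ0, du0]
  -- second derivative of the composite at 0
  have hEv : deriv (fun z => φf (u z)) =ᶠ[nhds (0:ℂ)] fun z => deriv φf (u z) * deriv u z :=
    Filter.eventuallyEq_of_mem (isOpen_ball.mem_nhds h0ball) hder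
  have hφ'd0 : DifferentiableAt ℂ (deriv φf) (u 0) := by rw [hu0]; exact hφ'd 0 h0ball
  have hd1 : DifferentiableAt ℂ (fun z => deriv φf (u z)) 0 :=
    DifferentiableAt.comp 0 hφ'd0 (hud 0 h0ball)
  have hdercomp : deriv (fun z => deriv φf (u z)) 0 = 2 * B' 2 * c 1 := by
    have h := deriv_comp 0 hφ'd0 (hud 0 h0ball)
    rw [show (fun z => deriv φf (u z)) = deriv φf ∘ u from rfl, h, hu0, ddφ0, du0]
  have rel2 : 2 * e 2 = 2 * B' 2 * c 1 ^ 2 + B' 1 * (2 * c 2) := by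
    rw [← ce2, hEv.deriv_eq, deriv_fun_mul hd1 (hu'd 0 h0ball), hdercomp, hu0, dφ0, du0, ddu0]
    ring
  constructor
  · rw [← rel1]; simp only [he, Nat.cast_one, if_neg one_ne_zero, add_zero]; ring
  · have : e 2 = B' 2 * c 1 ^ 2 + B' 1 * c 2 := by linear_combination rel2 / 2
    rw [show B' 1 * c 2 + B' 2 * c 1 ^ 2 = e 2 by rw [this]; ring]
    simp only [he, Nat.cast_ofNat, if_neg (by norm_num : (2:ℕ) ≠ 0), add_zero]
    ring


/-- In the class `H_Σ(τ,λ,δ;φ)`, comparing third coefficients gives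
`((1+2λ+6δ)/τ) a₃ = B₁ c₂ + B₂ c₁²` and `((1+2λ+6δ)/τ)(2a₂² - a₃) = B₁ d₂ + B₂ d₁²`;
subtracting and using the formula for `a₂` yields
`a₃ = B₁² c₁² τ²/(1+λ+2δ)² + B₁ τ (c₂-d₂)/(2(1+2λ+6δ))`. -/
theorem third_coefficient_relations (f g u v φf : ℂ → ℂ) (a A c d : ℕ → ℂ) (B : ℕ → ℝ) (lam del : ℝ) (τ : ℂ)
    (hlam : 1 ≤ lam) (hdel0 : 0 ≤ del) (hdel1 : del ≤ 1) (hτ : τ ≠ 0)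
    (hB0 : B 0 = 1) (hB1 : 0 < B 1)
    (hfd : DifferentiableOn ℂ f (ball (0 : ℂ) 1))
    (hfinj : Set.InjOn f (ball (0 : ℂ) 1))
    (hfs : ∀ z ∈ ball (0 : ℂ) 1, HasSum (fun n : ℕ => a n * z ^ n) (f z))
    (ha0 : a 0 = 0) (ha1 : a 1 = 1)
    (hgd : DifferentiableOn ℂ g (ball (0 : ℂ) 1))
    (hginj : Set.InjOn g (ball (0 : ℂ) 1))
    (hgs : ∀ w ∈ ball (0 : ℂ) 1, HasSum (fun n : ℕ => A n * w ^ n) (g w))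
    (hA0 : A 0 = 0) (hA1 : A 1 = 1)
    (hA2 : A 2 = -a 2) (hA3 : A 3 = 2 * (a 2) ^ 2 - a 3)
    (hA4 : A 4 = -(5 * (a 2) ^ 3 - 5 * a 2 * a 3 + a 4))
    (hud : DifferentiableOn ℂ u (ball (0 : ℂ) 1))
    (hus : ∀ z ∈ ball (0 : ℂ) 1, HasSum (fun n : ℕ => c n * z ^ n) (u z))
    (hc0 : c 0 = 0) (hubd : ∀ z ∈ ball (0 : ℂ) 1, ‖u z‖ < 1)
    (hvd : DifferentiableOn ℂ v (ball (0 : ℂ) 1))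
    (hvs : ∀ w ∈ ball (0 : ℂ) 1, HasSum (fun n : ℕ => d n * w ^ n) (v w))
    (hd0 : d 0 = 0) (hvbd : ∀ w ∈ ball (0 : ℂ) 1, ‖v w‖ < 1)
    (hφs : ∀ z ∈ ball (0 : ℂ) 1, HasSum (fun n : ℕ => (B n : ℂ) * z ^ n) (φf z))
    (hsub1 : ∀ z ∈ ball (0 : ℂ) 1, z ≠ 0 →
      1 + (1 / τ) * ((1 - (lam : ℂ)) * (f z / z) + (lam : ℂ) * deriv f z +
        (del : ℂ) * z * deriv (deriv f) z - 1) = φf (u z))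
    (hsub2 : ∀ w ∈ ball (0 : ℂ) 1, w ≠ 0 →
      1 + (1 / τ) * ((1 - (lam : ℂ)) * (g w / w) + (lam : ℂ) * deriv g w +
        (del : ℂ) * w * deriv (deriv g) w - 1) = φf (v w)) :
    ((1 + 2 * (lam : ℂ) + 6 * (del : ℂ)) / τ) * a 3 = (B 1 : ℂ) * c 2 + (B 2 : ℂ) * (c 1) ^ 2 ∧
    ((1 + 2 * (lam : ℂ) + 6 * (del : ℂ)) / τ) * (2 * (a 2) ^ 2 - a 3) =
      (B 1 : ℂ) * d 2 + (B 2 : ℂ) * (d 1) ^ 2 ∧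
    a 3 = (B 1 : ℂ) ^ 2 * (c 1) ^ 2 * τ ^ 2 / (1 + (lam : ℂ) + 2 * (del : ℂ)) ^ 2 +
      (B 1 : ℂ) * τ * (c 2 - d 2) / (2 * (1 + 2 * (lam : ℂ) + 6 * (del : ℂ))) := by
  have hB0' : ((B 0 : ℝ) : ℂ) = 1 := by rw [hB0]; norm_num
  obtain ⟨F1, F2⟩ := side_lemma f u φf a c (fun n => ((B n : ℝ) : ℂ)) (lam : ℂ) (del : ℂ) τ
    hτ hB0' hfs ha0 ha1 hus hc0 hubd hφs hsub1
  obtain ⟨G1, G2⟩ := side_lemma g v φf A d (fun n => ((B n : ℝ) : ℂ)) (lam : ℂ) (del : ℂ) τ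
    hτ hB0' hgs hA0 hA1 hvs hd0 hvbd hφs hsub2
  rw [hA2] at G1
  rw [hA3] at G2
  refine ⟨F2, G2, ?_⟩
  -- nonvanishing denominators
  have hP : (1 + (lam : ℂ) + 2 * (del : ℂ)) ≠ 0 := by
    have h := Complex.ofReal_ne_zero.2 (show (1 + lam + 2 * del : ℝ) ≠ 0 by positivity)
    push_cast at h
    exact h
  have hQ : (1 + 2 * (lam : ℂ) + 6 * (del : ℂ)) ≠ 0 := by
    have h := Complex.ofReal_ne_zero.2 (show (1 + 2 * lam + 6 * del : ℝ) ≠ 0 by positivity)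
    push_cast at h
    exact h
  have hBne : ((B 1 : ℝ) : ℂ) ≠ 0 := Complex.ofReal_ne_zero.2 hB1.ne'
  -- d 1 = - c 1
  have hd1 : d 1 = -c 1 := by
    apply mul_left_cancel₀ hBne
    linear_combination -G1 - F1
  rw [hd1] at G2
  -- clear denominators in the three relations
  have F1' : (1 + (lam : ℂ) + 2 * (del : ℂ)) * a 2 = (B 1 : ℂ) * c 1 * τ := by
    field_simp at F1
    linear_combination F1
  have F2' : (1 + 2 * (lam : ℂ) + 6 * (del : ℂ)) * a 3
      = ((B 1 : ℂ) * c 2 + (B 2 : ℂ) * c 1 ^ 2) * τ := by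
    field_simp at F2
    linear_combination F2
  have G2' : (1 + 2 * (lam : ℂ) + 6 * (del : ℂ)) * (2 * a 2 ^ 2 - a 3)
      = ((B 1 : ℂ) * d 2 + (B 2 : ℂ) * c 1 ^ 2) * τ := by
    field_simp at G2
    linear_combination G2
  have key1 : 2 * (1 + 2 * (lam : ℂ) + 6 * (del : ℂ)) * a 3
      = 2 * (1 + 2 * (lam : ℂ) + 6 * (del : ℂ)) * a 2 ^ 2
        + τ * (B 1 : ℂ) * (c 2 - d 2) := by
    linear_combination F2' - G2'
  have key2 : (1 + (lam : ℂ) + 2 * (del : ℂ)) ^ 2 * a 2 ^ 2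
      = (B 1 : ℂ) ^ 2 * c 1 ^ 2 * τ ^ 2 := by
    linear_combination ((1 + (lam : ℂ) + 2 * (del : ℂ)) * a 2 + (B 1 : ℂ) * c 1 * τ) * F1'
  have hQ2 : (1 + (lam : ℂ) * 2 + (del : ℂ) * 6) ≠ 0 := by
    rw [show (1 + (lam : ℂ) * 2 + (del : ℂ) * 6) = 1 + 2 * (lam : ℂ) + 6 * (del : ℂ) by ring]; exact hQ
  field_simp
  linear_combination (1 + (lam : ℂ) + 2 * (del : ℂ)) ^ 2 * key1
    + 2 * (1 + 2 * (lam : ℂ) + 6 * (del : ℂ)) * key2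
end

section
/- Under the hypotheses of the class H_Σ(τ,λ,δ;φ), comparing fourth coefficients gives ((1+3λ+12δ)/τ)a₄ = B₁c₃ + 2B₂c₁c₂ + B₃c₁³ and −((1+3λ+12δ)/τ)(5a₂³ − 5a₂a₃ + a₄) = B₁d₃ + 2B₂d₁d₂ + B₃d₁³; combining with the formulas for a₂ and a₃ yields a₄ = 5B₁²c₁τ²(c₂−d₂)/(4(1+λ+2δ)(1+2λ+6δ)) + B₁τ(c₃−d₃)/(2(1+3λ+12δ)) + B₃c₁³τ/(1+3λ+12δ) + B₂c₁τ(c₂+d₂)/(1+3λ+12δ). -/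
set_option maxHeartbeats 1000000

open Metric
open scoped Topology NNReal ENNReal

namespace FCR

lemma hasSum_at_zero (a : ℕ → ℂ) : HasSum (fun n => a n * (0:ℂ) ^ n) (a 0) := by
  have h := hasSum_single (f := fun n => a n * (0:ℂ) ^ n) 0 (by
    intro b hb
    simp [zero_pow hb])
  simpa using h

lemma hasFPS {F : ℂ → ℂ} {a : ℕ → ℂ} {r : ℝ≥0} (hr : 0 < r)
    (h : ∀ z ∈ Metric.ball (0:ℂ) (r:ℝ), HasSum (fun n => a n * z ^ n) (F z)) :
    HasFPowerSeriesOnBall F (FormalMultilinearSeries.ofScalars ℂ a) 0 r := by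
  constructor
  · refine ENNReal.le_of_forall_nnreal_lt (fun s hs => ?_)
    have hs' : (s : ℝ) < r := by exact_mod_cast hs
    have hz : ((s:ℝ) : ℂ) ∈ Metric.ball (0:ℂ) (r:ℝ) := by
      rw [mem_ball_zero_iff]
      simpa [abs_of_nonneg s.coe_nonneg] using hs'
    have ht := ((h _ hz).summable).tendsto_atTop_zero
    refine FormalMultilinearSeries.le_radius_of_tendsto _ (l := 0) ?_
    have he : (fun n => ‖FormalMultilinearSeries.ofScalars ℂ a n‖ * (s:ℝ)^n)
        = fun n => ‖a n * ((s:ℝ):ℂ)^n‖ := by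
      funext n
      rw [FormalMultilinearSeries.ofScalars_norm, norm_mul, norm_pow]
      simp [abs_of_nonneg s.coe_nonneg]
    rw [he]
    have := ht.norm
    simpa using this
  · exact_mod_cast hr
  · intro y hy
    rw [Metric.emetric_ball_nnreal] at hy
    have hh := h y hy
    simp only [FormalMultilinearSeries.ofScalars_apply_eq, smul_eq_mul, zero_add]
    exact hh

lemma summable_norm_of_hasSum {F : ℂ → ℂ} {a : ℕ → ℂ} {r : ℝ≥0} (hr : 0 < r)
    (h : ∀ z ∈ Metric.ball (0:ℂ) (r:ℝ), HasSum (fun n => a n * z ^ n) (F z))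
    {z : ℂ} (hz : z ∈ Metric.ball (0:ℂ) (r:ℝ)) :
    Summable fun n => ‖a n * z ^ n‖ := by
  have H := (hasFPS hr h).r_le
  have hzr : (‖z‖₊ : ℝ≥0∞) < (FormalMultilinearSeries.ofScalars ℂ a).radius := by
    refine lt_of_lt_of_le ?_ H
    have : ‖z‖ < (r:ℝ) := mem_ball_zero_iff.mp hz
    exact_mod_cast this
  have hs := (FormalMultilinearSeries.ofScalars ℂ a).summable_norm_mul_pow hzr
  refine hs.congr fun n => ?_
  rw [FormalMultilinearSeries.ofScalars_norm, norm_mul, norm_pow]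
  simp


lemma hasSum_deriv {F : ℂ → ℂ} {a : ℕ → ℂ} {r : ℝ≥0} (hr : 0 < r)
    (h : ∀ z ∈ Metric.ball (0:ℂ) (r:ℝ), HasSum (fun n => a n * z ^ n) (F z)) :
    ∀ z ∈ Metric.ball (0:ℂ) (r:ℝ), HasSum (fun n : ℕ => ((n:ℂ)+1) * a (n+1) * z ^ n) (deriv F z) := by
  have H := hasFPS hr h
  intro z hz
  rcases eq_or_ne z 0 with rfl | hz0
  · have hd : deriv F 0 = a 1 := by
      have h1 := H.hasFPowerSeriesAt.deriv
      rw [h1, FormalMultilinearSeries.ofScalars_apply_eq]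
      simp
    rw [hd]
    have h2 := hasSum_at_zero (fun n => ((n:ℂ)+1) * a (n+1))
    simpa using h2
  · have hz' : z ∈ Metric.eball (0:ℂ) r := by rwa [Metric.emetric_ball_nnreal]
    have h1 := H.fderiv.hasSum hz'
    have h2 := (ContinuousLinearMap.apply ℂ ℂ z).hasSum h1
    have hterm : (fun n => ((FormalMultilinearSeries.ofScalars ℂ a).derivSeries n fun _ => z) z)
        = fun n : ℕ => z * (((n:ℂ)+1) * a (n+1) * z ^ n) := by
      funext n
      rw [FormalMultilinearSeries.derivSeries_apply_diag, FormalMultilinearSeries.ofScalars_apply_eq]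
      push_cast [nsmul_eq_mul, smul_eq_mul]
      ring
    have hval : fderiv ℂ F (0 + z) z = z * deriv F z := by
      rw [zero_add]
      have h3 : fderiv ℂ F z z = fderiv ℂ F z (z • (1:ℂ)) := by simp
      rw [h3, map_smul, smul_eq_mul, fderiv_apply_one_eq_deriv]
    simp only [ContinuousLinearMap.apply_apply] at h2
    rw [hterm, hval] at h2
    exact (hasSum_mul_left_iff hz0).mp h2

lemma coeff_unique {a b : ℕ → ℂ} {S : ℂ → ℂ} {r₁ r₂ : ℝ≥0} (h₁ : 0 < r₁) (h₂ : 0 < r₂)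
    (ha : ∀ z ∈ Metric.ball (0:ℂ) (r₁:ℝ), z ≠ 0 → HasSum (fun n => a n * z ^ n) (S z))
    (hb : ∀ z ∈ Metric.ball (0:ℂ) (r₂:ℝ), z ≠ 0 → HasSum (fun n => b n * z ^ n) (S z)) :
    a = b := by
  set Fa : ℂ → ℂ := fun z => ∑' n, a n * z ^ n with hFa_def
  set Fb : ℂ → ℂ := fun z => ∑' n, b n * z ^ n with hFb_def
  have hFa : ∀ z ∈ Metric.ball (0:ℂ) (r₁:ℝ), HasSum (fun n => a n * z ^ n) (Fa z) := by
    intro z hz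
    rcases eq_or_ne z 0 with rfl | hz0
    · have h0 := hasSum_at_zero a
      have : Fa 0 = a 0 := h0.tsum_eq
      rw [this]; exact h0
    · have h' := ha z hz hz0
      have : Fa z = S z := h'.tsum_eq
      rw [this]; exact h'
  have hFb : ∀ z ∈ Metric.ball (0:ℂ) (r₂:ℝ), HasSum (fun n => b n * z ^ n) (Fb z) := by
    intro z hz
    rcases eq_or_ne z 0 with rfl | hz0
    · have h0 := hasSum_at_zero b
      have : Fb 0 = b 0 := h0.tsum_eq
      rw [this]; exact h0
    · have h' := hb z hz hz0
      have : Fb z = S z := h'.tsum_eq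
      rw [this]; exact h'
  have Ha := (hasFPS h₁ hFa).hasFPowerSeriesAt
  have Hb := (hasFPS h₂ hFb).hasFPowerSeriesAt
  have hmin : (0:ℝ) < min (r₁:ℝ) (r₂:ℝ) := lt_min (by exact_mod_cast h₁) (by exact_mod_cast h₂)
  have hne : ∀ z : ℂ, ‖z‖ < min (r₁:ℝ) (r₂:ℝ) → z ≠ 0 → Fa z = Fb z := by
    intro z hz hz0
    have hz1 : z ∈ Metric.ball (0:ℂ) (r₁:ℝ) := mem_ball_zero_iff.mpr (lt_of_lt_of_le hz (min_le_left _ _))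
    have hz2 : z ∈ Metric.ball (0:ℂ) (r₂:ℝ) := mem_ball_zero_iff.mpr (lt_of_lt_of_le hz (min_le_right _ _))
    have e1 : Fa z = S z := (ha z hz1 hz0).tsum_eq
    have e2 : Fb z = S z := (hb z hz2 hz0).tsum_eq
    rw [e1, e2]
  have hball : ∀ᶠ z in 𝓝 (0:ℂ), ‖z‖ < min (r₁:ℝ) (r₂:ℝ) := by
    have := Metric.ball_mem_nhds (0:ℂ) hmin
    filter_upwards [this] with z hz
    exact mem_ball_zero_iff.mp hz
  haveI : (𝓝[≠] (0:ℂ)).NeBot := inferInstance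
  have h00 : Fa 0 = Fb 0 := by
    have hev' : ∀ᶠ z in 𝓝[≠] (0:ℂ), Fa z = Fb z := by
      have h1 : ∀ᶠ z in 𝓝[≠] (0:ℂ), ‖z‖ < min (r₁:ℝ) (r₂:ℝ) := hball.filter_mono nhdsWithin_le_nhds
      have h2 : ∀ᶠ z in 𝓝[≠] (0:ℂ), z ≠ 0 := by
        have : ({0}ᶜ : Set ℂ) ∈ 𝓝[≠] (0:ℂ) := self_mem_nhdsWithin
        filter_upwards [this] with z hz using hz
      filter_upwards [h1, h2] with z hz hz0 using hne z hz hz0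
    have ta : Filter.Tendsto Fa (𝓝[≠] (0:ℂ)) (𝓝 (Fa 0)) :=
      Ha.continuousAt.continuousWithinAt.tendsto
    have tb : Filter.Tendsto Fb (𝓝[≠] (0:ℂ)) (𝓝 (Fb 0)) :=
      Hb.continuousAt.continuousWithinAt.tendsto
    have ta' : Filter.Tendsto Fb (𝓝[≠] (0:ℂ)) (𝓝 (Fa 0)) := ta.congr' hev'
    exact tendsto_nhds_unique ta' tb
  have hev : ∀ᶠ z in 𝓝 (0:ℂ), Fa z = Fb z := by
    filter_upwards [hball] with z hz
    rcases eq_or_ne z 0 with rfl | hz0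
    · exact h00
    · exact hne z hz hz0
  have heq := Ha.eq_formalMultilinearSeries_of_eventually Hb hev
  exact FormalMultilinearSeries.ofScalars_series_injective ℂ ℂ heq

lemma cauchy_step {x y : ℕ → ℂ} {X Y : ℂ} {z : ℂ}
    (hx : HasSum (fun n => x n * z ^ n) X) (hy : HasSum (fun n => y n * z ^ n) Y)
    (hx' : Summable fun n => ‖x n * z ^ n‖) (hy' : Summable fun n => ‖y n * z ^ n‖) :
    HasSum (fun n => (∑ k ∈ Finset.range (n+1), x k * y (n - k)) * z ^ n) (X * Y) ∧
      Summable fun n => ‖(∑ k ∈ Finset.range (n+1), x k * y (n - k)) * z ^ n‖ := by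
  have key : ∀ n, (∑ k ∈ Finset.range (n+1), x k * y (n - k)) * z ^ n
      = ∑ k ∈ Finset.range (n+1), (x k * z ^ k) * (y (n - k) * z ^ (n - k)) := by
    intro n
    rw [Finset.sum_mul]
    refine Finset.sum_congr rfl fun k hk => ?_
    have hk' : k ≤ n := Nat.lt_succ_iff.mp (Finset.mem_range.mp hk)
    rw [show (x k * z ^ k) * (y (n - k) * z ^ (n - k)) = x k * y (n-k) * (z ^ k * z ^ (n-k)) by ring,
      ← pow_add, Nat.add_sub_cancel' hk']
  constructor
  · have hs := hasSum_sum_range_mul_of_summable_norm hx' hy'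
    rw [hx.tsum_eq, hy.tsum_eq] at hs
    refine hs.congr_fun fun n => ?_
    rw [key n]
  · have hs := summable_norm_sum_mul_range_of_summable_norm hx' hy'
    refine hs.congr fun n => ?_
    rw [key n]


lemma side (f u φf : ℂ → ℂ) (a c : ℕ → ℂ) (B : ℕ → ℝ) (lam del : ℝ) (τ : ℂ) (hτ : τ ≠ 0)
    (hfs : ∀ z ∈ Metric.ball (0:ℂ) 1, HasSum (fun n : ℕ => a n * z ^ n) (f z))
    (ha0 : a 0 = 0) (ha1 : a 1 = 1)
    (hus : ∀ z ∈ Metric.ball (0:ℂ) 1, HasSum (fun n : ℕ => c n * z ^ n) (u z))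
    (hc0 : c 0 = 0) (hubd : ∀ z ∈ Metric.ball (0:ℂ) 1, ‖u z‖ < 1)
    (hφs : ∀ z ∈ Metric.ball (0:ℂ) 1, HasSum (fun n : ℕ => (B n : ℂ) * z ^ n) (φf z))
    (hsub : ∀ z ∈ Metric.ball (0:ℂ) 1, z ≠ 0 →
      1 + (1 / τ) * ((1 - (lam : ℂ)) * (f z / z) + (lam : ℂ) * deriv f z +
        (del : ℂ) * z * deriv (deriv f) z - 1) = φf (u z)) :
    ((1 + (lam : ℂ) + 2 * (del : ℂ)) / τ) * a 2 = (B 1 : ℂ) * c 1 ∧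
    ((1 + 2 * (lam : ℂ) + 6 * (del : ℂ)) / τ) * a 3 = (B 1 : ℂ) * c 2 + (B 2 : ℂ) * (c 1) ^ 2 ∧
    ((1 + 3 * (lam : ℂ) + 12 * (del : ℂ)) / τ) * a 4 =
      (B 1 : ℂ) * c 3 + 2 * (B 2 : ℂ) * c 1 * c 2 + (B 3 : ℂ) * (c 1) ^ 3 := by
  -- coerced-radius versions of hypotheses
  have hfs' : ∀ z ∈ Metric.ball (0:ℂ) ((1:ℝ≥0):ℝ), HasSum (fun n : ℕ => a n * z ^ n) (f z) := by
    simpa using hfs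
  have hus' : ∀ z ∈ Metric.ball (0:ℂ) ((1:ℝ≥0):ℝ), HasSum (fun n : ℕ => c n * z ^ n) (u z) := by
    simpa using hus
  have hφs' : ∀ z ∈ Metric.ball (0:ℂ) ((1:ℝ≥0):ℝ),
      HasSum (fun n : ℕ => (B n : ℂ) * z ^ n) (φf z) := by simpa using hφs
  -- LHS coefficients
  set e : ℕ → ℂ := fun n =>
    if n = 0 then 1 else
      (1/τ) * ((1 - (lam:ℂ)) + (lam:ℂ)*((n:ℂ)+1) + (del:ℂ)*((n:ℂ)+1)*(n:ℂ)) * a (n+1) with he_def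
  have hd1 := hasSum_deriv one_pos hfs'
  have hd2 := hasSum_deriv one_pos hd1
  have hLHS : ∀ z ∈ Metric.ball (0:ℂ) ((1:ℝ≥0):ℝ), z ≠ 0 →
      HasSum (fun n => e n * z ^ n) (φf (u z)) := by
    intro z hz hz0
    have hz1 : z ∈ Metric.ball (0:ℂ) (1:ℝ) := by simpa using hz
    -- f z / z
    have h1 : HasSum (fun n : ℕ => a (n+1) * z ^ (n+1)) (f z) := by
      refine (hasSum_nat_add_iff (f := fun n : ℕ => a n * z ^ n) 1).mpr ?_
      simpa [ha0] using hfs z hz1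
    have h1' : HasSum (fun n : ℕ => a (n+1) * z ^ n) (f z / z) := by
      refine (hasSum_mul_left_iff hz0).mp ?_
      have e1 : (fun n : ℕ => z * (a (n+1) * z ^ n)) = fun n : ℕ => a (n+1) * z ^ (n+1) := by
        funext n; ring
      rw [e1, show z * (f z / z) = f z by field_simp]
      exact h1
    have h2 := hd1 z hz
    have h3 := hd2 z hz
    have h3' : HasSum (fun n : ℕ => (n:ℂ) * ((n:ℂ)+1) * a (n+1) * z ^ n)
        (z * deriv (deriv f) z) := by
      have hm := h3.mul_left z
      have hm' : HasSum (fun n : ℕ => (((n+1:ℕ):ℂ)) * (((n+1:ℕ):ℂ)+1) * a ((n+1)+1) * z ^ ((n+1)))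
          (z * deriv (deriv f) z) := hm.congr_fun fun n => by push_cast; ring
      have hfull := (hasSum_nat_add_iff
        (f := fun n : ℕ => (n:ℂ) * ((n:ℂ)+1) * a (n+1) * z ^ n) 1).mp hm'
      simpa using hfull
    have hsum : HasSum (fun n : ℕ => (1/τ) * ((1-(lam:ℂ)) * (a (n+1) * z ^ n)
          + ((lam:ℂ) * (((n:ℂ)+1) * a (n+1) * z ^ n)
          + (del:ℂ) * ((n:ℂ) * ((n:ℂ)+1) * a (n+1) * z ^ n))))
        ((1/τ) * ((1-(lam:ℂ)) * (f z / z) + ((lam:ℂ) * deriv f z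
          + (del:ℂ) * (z * deriv (deriv f) z)))) :=
      ((h1'.mul_left _).add ((h2.mul_left _).add (h3'.mul_left _))).mul_left _
    have hconst : HasSum (fun n : ℕ => if n = 0 then (1 - 1/τ) else 0) (1 - 1/τ) :=
      hasSum_ite_eq 0 _
    have htot := hsum.add hconst
    have hfun : (fun n : ℕ => (1/τ) * ((1-(lam:ℂ)) * (a (n+1) * z ^ n)
          + ((lam:ℂ) * (((n:ℂ)+1) * a (n+1) * z ^ n)
          + (del:ℂ) * ((n:ℂ) * ((n:ℂ)+1) * a (n+1) * z ^ n)))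
          + (if n = 0 then (1 - 1/τ) else 0)) = fun n => e n * z ^ n := by
      funext n
      rcases n with _ | m
      · simp [he_def, ha1]
      · simp only [he_def, if_neg (Nat.succ_ne_zero m)]
        push_cast
        ring
    have hval : (1/τ) * ((1-(lam:ℂ)) * (f z / z) + ((lam:ℂ) * deriv f z
          + (del:ℂ) * (z * deriv (deriv f) z))) + (1 - 1/τ) = φf (u z) := by
      rw [← hsub z hz1 hz0]; ring
    rw [hfun] at htot
    rw [← hval]
    exact htot
  -- RHS: tail function R
  set R : ℂ → ℂ := fun w => ∑' n, ((B (n+4) : ℝ) : ℂ) * w ^ n with hR_def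
  have hRsummable : ∀ w : ℂ, w ∈ Metric.ball (0:ℂ) ((1:ℝ≥0):ℝ) →
      Summable (fun n : ℕ => ((B (n+4):ℝ):ℂ) * w ^ n) := by
    intro w hw
    rcases eq_or_ne w 0 with rfl | hw0
    · refine summable_of_ne_finset_zero (s := {0}) ?_
      intro n hn
      have : n ≠ 0 := by simpa using hn
      simp [zero_pow this]
    · have h1 := (hφs' w hw).summable
      have h2 := (summable_nat_add_iff 4).mpr h1
      have h3 := h2.mul_left ((w⁻¹) ^ 4)
      refine h3.congr fun n => ?_
      field_simp
      ring
  have hR : ∀ w ∈ Metric.ball (0:ℂ) ((1:ℝ≥0):ℝ),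
      HasSum (fun n : ℕ => ((B (n+4):ℝ):ℂ) * w ^ n) (R w) :=
    fun w hw => (hRsummable w hw).hasSum
  have hsplit : ∀ w : ℂ, w ∈ Metric.ball (0:ℂ) ((1:ℝ≥0):ℝ) →
      φf w = (B 0:ℂ) + (B 1:ℂ)*w + (B 2:ℂ)*w^2 + (B 3:ℂ)*w^3 + w^4 * R w := by
    intro w hw
    have hφw := hφs' w hw
    have hT : HasSum (fun n : ℕ => ((B (n+4):ℝ):ℂ) * w ^ (n+4))
        (φf w - ((B 0:ℂ) + (B 1:ℂ)*w + (B 2:ℂ)*w^2 + (B 3:ℂ)*w^3)) := by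
      refine (hasSum_nat_add_iff (f := fun n : ℕ => ((B n:ℝ):ℂ) * w ^ n) 4).mpr ?_
      convert hφw using 1
      · rfl
      simp only [Finset.sum_range_succ, Finset.sum_range_zero, pow_zero, pow_one]
      push_cast
      ring
    have hT2 := (hR w hw).mul_left (w^4)
    have e2 : (fun n : ℕ => w^4 * (((B (n+4):ℝ):ℂ) * w ^ n))
        = fun n : ℕ => ((B (n+4):ℝ):ℂ) * w ^ (n+4) := by
      funext n; ring
    rw [e2] at hT2
    have := hT.unique hT2
    linear_combination this
  -- V function : u z / z
  set V : ℂ → ℂ := fun z => ∑' n, c (n+1) * z ^ n with hV_def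
  have hVsummable : ∀ z : ℂ, z ∈ Metric.ball (0:ℂ) ((1:ℝ≥0):ℝ) →
      Summable (fun n : ℕ => c (n+1) * z ^ n) := by
    intro z hz
    rcases eq_or_ne z 0 with rfl | hz0
    · refine summable_of_ne_finset_zero (s := {0}) ?_
      intro n hn
      have : n ≠ 0 := by simpa using hn
      simp [zero_pow this]
    · have h1 := (hus' z hz).summable
      have h2 := (summable_nat_add_iff 1).mpr h1
      have h3 := h2.mul_left (z⁻¹)
      refine h3.congr fun n => ?_
      field_simp
      ring
  have hV : ∀ z ∈ Metric.ball (0:ℂ) ((1:ℝ≥0):ℝ),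
      HasSum (fun n : ℕ => c (n+1) * z ^ n) (V z) :=
    fun z hz => (hVsummable z hz).hasSum
  have hVu : ∀ z ∈ Metric.ball (0:ℂ) ((1:ℝ≥0):ℝ), z ≠ 0 → u z = z * V z := by
    intro z hz hz0
    have h1 : HasSum (fun n : ℕ => c (n+1) * z ^ (n+1)) (u z) := by
      refine (hasSum_nat_add_iff (f := fun n : ℕ => c n * z ^ n) 1).mpr ?_
      simpa [hc0] using hus' z hz
    have h2 := (hV z hz).mul_left z
    have e1 : (fun n : ℕ => z * (c (n+1) * z ^ n)) = fun n : ℕ => c (n+1) * z ^ (n+1) := by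
      funext n; ring
    rw [e1] at h2
    exact h1.unique h2
  have hu0 : u 0 = 0 := by
    have h1 := hus 0 (by simp)
    have h2 := hasSum_at_zero c
    rw [h1.unique h2, hc0]
  -- analyticity of the tail composite
  have hVa : AnalyticAt ℂ V 0 := (hasFPS one_pos hV).analyticAt
  have hua : AnalyticAt ℂ u 0 := (hasFPS one_pos hus').analyticAt
  have hRa : AnalyticAt ℂ R 0 := (hasFPS one_pos hR).analyticAt
  have hRu : AnalyticAt ℂ (fun z => R (u z)) 0 := by
    have h1 : AnalyticAt ℂ R (u 0) := by rw [hu0]; exact hRa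
    exact h1.comp hua
  have hHa : AnalyticAt ℂ (fun z => (V z)^4 * R (u z)) 0 := (hVa.pow 4).mul hRu
  obtain ⟨s, hs⟩ := hHa
  obtain ⟨rr, hrr⟩ := hs
  obtain ⟨ρ, hρpos, hρlt⟩ : ∃ ρ : ℝ≥0, 0 < ρ ∧ (ρ:ℝ≥0∞) < min rr 1 := by
    have hpos : (0:ℝ≥0∞) < min rr 1 := lt_min hrr.r_pos (by norm_num)
    obtain ⟨ρ, h1, h2⟩ := ENNReal.lt_iff_exists_nnreal_btwn.mp hpos
    exact ⟨ρ, by exact_mod_cast h1, h2⟩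
  have hρ1 : (ρ:ℝ) < 1 := by
    have := (lt_min_iff.mp hρlt).2
    exact_mod_cast this
  have hρr : (ρ:ℝ≥0∞) < rr := (lt_min_iff.mp hρlt).1
  have hHs : ∀ z ∈ Metric.ball (0:ℂ) (ρ:ℝ), HasSum (fun n => s.coeff n * z ^ n)
      ((V z)^4 * R (u z)) := by
    intro z hz
    have hz' : z ∈ Metric.eball (0:ℂ) rr := by
      rw [Metric.mem_eball, edist_zero_right]
      refine lt_trans ?_ hρr
      have : ‖z‖ < (ρ:ℝ) := mem_ball_zero_iff.mp hz
      exact_mod_cast this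
    have h1 := hrr.hasSum hz'
    simp only [zero_add] at h1
    convert h1 using 1
    · rfl
    funext n
    rw [FormalMultilinearSeries.apply_eq_pow_smul_coeff, smul_eq_mul]
    ring
  -- tail coefficients
  set t : ℕ → ℂ := fun n => if n < 4 then 0 else s.coeff (n - 4) with ht_def
  have hts : ∀ z ∈ Metric.ball (0:ℂ) (ρ:ℝ),
      HasSum (fun n => t n * z ^ n) (z^4 * ((V z)^4 * R (u z))) := by
    intro z hz
    have h4 := (hHs z hz).mul_left (z^4)
    have hshift : (fun n : ℕ => t (n+4) * z ^ (n+4)) = fun n : ℕ => z^4 * (s.coeff n * z ^ n) := by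
      funext n
      simp only [ht_def]
      rw [if_neg (by omega), Nat.add_sub_cancel]
      ring
    have hm' : HasSum (fun n : ℕ => t (n+4) * z ^ (n+4)) (z^4 * ((V z)^4 * R (u z))) := by
      rw [hshift]; exact h4
    have := (hasSum_nat_add_iff (f := fun n : ℕ => t n * z ^ n) 4).mp hm'
    simpa [ht_def, Finset.sum_range_succ] using this
  -- Cauchy coefficients
  set c2 : ℕ → ℂ := fun n => ∑ k ∈ Finset.range (n+1), c k * c (n - k) with hc2_def
  set c3 : ℕ → ℂ := fun n => ∑ k ∈ Finset.range (n+1), c k * c2 (n - k) with hc3_def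
  set E : ℕ → ℂ := fun n => (if n = 0 then ((B 0:ℝ):ℂ) else 0) + (B 1:ℂ) * c n
      + (B 2:ℂ) * c2 n + (B 3:ℂ) * c3 n + t n with hE_def
  have hRHS : ∀ z ∈ Metric.ball (0:ℂ) (ρ:ℝ), z ≠ 0 →
      HasSum (fun n => E n * z ^ n) (φf (u z)) := by
    intro z hz hz0
    have hz1 : z ∈ Metric.ball (0:ℂ) ((1:ℝ≥0):ℝ) := by
      have : ‖z‖ < (ρ:ℝ) := mem_ball_zero_iff.mp hz
      exact mem_ball_zero_iff.mpr (lt_trans this hρ1)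
    have hw : ‖u z‖ < 1 := hubd z (by simpa using hz1)
    have hcs := hus' z hz1
    have hcn := summable_norm_of_hasSum one_pos hus' hz1
    obtain ⟨h2s, h2n⟩ := cauchy_step hcs hcs hcn hcn
    obtain ⟨h3s, _⟩ := cauchy_step hcs h2s hcn h2n
    have k0 : HasSum (fun n : ℕ => (if n = 0 then ((B 0:ℝ):ℂ) else 0) * z ^ n) ((B 0:ℝ):ℂ) :=
      (hasSum_ite_eq (0:ℕ) ((B 0:ℝ):ℂ)).congr_fun fun n => by
        rcases n with _|m <;> simp
    have k1 := hcs.mul_left ((B 1:ℝ):ℂ)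
    have k2 := h2s.mul_left ((B 2:ℝ):ℂ)
    have k3 := h3s.mul_left ((B 3:ℝ):ℂ)
    have k4 := hts z hz
    have tot := (((k0.add k1).add k2).add k3).add k4
    have hwball : u z ∈ Metric.ball (0:ℂ) ((1:ℝ≥0):ℝ) := by
      rw [mem_ball_zero_iff]; simpa using hw
    have hval2 : ((((B 0:ℝ):ℂ) + (B 1:ℂ) * u z) + (B 2:ℂ) * (u z * u z)
          + (B 3:ℂ) * (u z * (u z * u z))) + z^4 * ((V z)^4 * R (u z)) = φf (u z) := by
      rw [hsplit (u z) hwball, hVu z hz1 hz0]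
      ring
    rw [← hval2]
    refine tot.congr_fun fun n => ?_
    simp only [hE_def, hc2_def, hc3_def]
    ring
  -- uniqueness of coefficients
  have hEq : e = E := coeff_unique (S := fun z => φf (u z)) one_pos hρpos hLHS hRHS
  -- evaluate low coefficients
  have hc2_0 : c2 0 = 0 := by simp [hc2_def, hc0]
  have hc2_1 : c2 1 = 0 := by simp [hc2_def, Finset.sum_range_succ, hc0]
  have hc2_2 : c2 2 = c 1 ^ 2 := by
    simp [hc2_def, Finset.sum_range_succ, hc0]; ring
  have hc2_3 : c2 3 = 2 * c 1 * c 2 := by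
    simp [hc2_def, Finset.sum_range_succ, hc0]; ring
  have hc3_1 : c3 1 = 0 := by
    simp [hc3_def, Finset.sum_range_succ, hc0, hc2_0, hc2_1]
  have hc3_2 : c3 2 = 0 := by
    simp [hc3_def, Finset.sum_range_succ, hc0, hc2_0, hc2_1]
  have hc3_3 : c3 3 = c 1 ^ 3 := by
    simp [hc3_def, Finset.sum_range_succ, hc0, hc2_0, hc2_1, hc2_2]; ring
  have ht1 : t 1 = 0 := by norm_num [ht_def]
  have ht2 : t 2 = 0 := by norm_num [ht_def]
  have ht3 : t 3 = 0 := by norm_num [ht_def]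
  refine ⟨?_, ?_, ?_⟩
  · have h1 := congrFun hEq 1
    simp only [he_def, hE_def] at h1
    norm_num [hc2_1, hc3_1, ht1] at h1
    linear_combination h1
  · have h2 := congrFun hEq 2
    simp only [he_def, hE_def] at h2
    norm_num [hc2_2, hc3_2, ht2] at h2
    linear_combination h2
  · have h3 := congrFun hEq 3
    simp only [he_def, hE_def] at h3
    norm_num [hc2_3, hc3_3, ht3] at h3
    linear_combination h3


end FCR

open Metric

/-- In the class `H_Σ(τ,λ,δ;φ)`, comparing fourth coefficients gives
`((1+3λ+12δ)/τ) a₄ = B₁ c₃ + 2B₂ c₁ c₂ + B₃ c₁³` and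
`-((1+3λ+12δ)/τ)(5a₂³ - 5a₂a₃ + a₄) = B₁ d₃ + 2B₂ d₁ d₂ + B₃ d₁³`; combining with the
formulas for `a₂` and `a₃` yields the stated formula for `a₄`. -/
theorem fourth_coefficient_relations (f g u v φf : ℂ → ℂ) (a A c d : ℕ → ℂ) (B : ℕ → ℝ) (lam del : ℝ) (τ : ℂ)
    (hlam : 1 ≤ lam) (hdel0 : 0 ≤ del) (hdel1 : del ≤ 1) (hτ : τ ≠ 0)
    (hB0 : B 0 = 1) (hB1 : 0 < B 1)
    (hfd : DifferentiableOn ℂ f (ball (0 : ℂ) 1))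
    (hfinj : Set.InjOn f (ball (0 : ℂ) 1))
    (hfs : ∀ z ∈ ball (0 : ℂ) 1, HasSum (fun n : ℕ => a n * z ^ n) (f z))
    (ha0 : a 0 = 0) (ha1 : a 1 = 1)
    (hgd : DifferentiableOn ℂ g (ball (0 : ℂ) 1))
    (hginj : Set.InjOn g (ball (0 : ℂ) 1))
    (hgs : ∀ w ∈ ball (0 : ℂ) 1, HasSum (fun n : ℕ => A n * w ^ n) (g w))
    (hA0 : A 0 = 0) (hA1 : A 1 = 1)
    (hA2 : A 2 = -a 2) (hA3 : A 3 = 2 * (a 2) ^ 2 - a 3)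
    (hA4 : A 4 = -(5 * (a 2) ^ 3 - 5 * a 2 * a 3 + a 4))
    (hud : DifferentiableOn ℂ u (ball (0 : ℂ) 1))
    (hus : ∀ z ∈ ball (0 : ℂ) 1, HasSum (fun n : ℕ => c n * z ^ n) (u z))
    (hc0 : c 0 = 0) (hubd : ∀ z ∈ ball (0 : ℂ) 1, ‖u z‖ < 1)
    (hvd : DifferentiableOn ℂ v (ball (0 : ℂ) 1))
    (hvs : ∀ w ∈ ball (0 : ℂ) 1, HasSum (fun n : ℕ => d n * w ^ n) (v w))
    (hd0 : d 0 = 0) (hvbd : ∀ w ∈ ball (0 : ℂ) 1, ‖v w‖ < 1)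
    (hφs : ∀ z ∈ ball (0 : ℂ) 1, HasSum (fun n : ℕ => (B n : ℂ) * z ^ n) (φf z))
    (hsub1 : ∀ z ∈ ball (0 : ℂ) 1, z ≠ 0 →
      1 + (1 / τ) * ((1 - (lam : ℂ)) * (f z / z) + (lam : ℂ) * deriv f z +
        (del : ℂ) * z * deriv (deriv f) z - 1) = φf (u z))
    (hsub2 : ∀ w ∈ ball (0 : ℂ) 1, w ≠ 0 →
      1 + (1 / τ) * ((1 - (lam : ℂ)) * (g w / w) + (lam : ℂ) * deriv g w +
        (del : ℂ) * w * deriv (deriv g) w - 1) = φf (v w)) :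
    ((1 + 3 * (lam : ℂ) + 12 * (del : ℂ)) / τ) * a 4 =
      (B 1 : ℂ) * c 3 + 2 * (B 2 : ℂ) * c 1 * c 2 + (B 3 : ℂ) * (c 1) ^ 3 ∧
    -((1 + 3 * (lam : ℂ) + 12 * (del : ℂ)) / τ) * (5 * (a 2) ^ 3 - 5 * a 2 * a 3 + a 4) =
      (B 1 : ℂ) * d 3 + 2 * (B 2 : ℂ) * d 1 * d 2 + (B 3 : ℂ) * (d 1) ^ 3 ∧
    a 4 = 5 * (B 1 : ℂ) ^ 2 * c 1 * τ ^ 2 * (c 2 - d 2) /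
        (4 * (1 + (lam : ℂ) + 2 * (del : ℂ)) * (1 + 2 * (lam : ℂ) + 6 * (del : ℂ))) +
      (B 1 : ℂ) * τ * (c 3 - d 3) / (2 * (1 + 3 * (lam : ℂ) + 12 * (del : ℂ))) +
      (B 3 : ℂ) * (c 1) ^ 3 * τ / (1 + 3 * (lam : ℂ) + 12 * (del : ℂ)) +
      (B 2 : ℂ) * c 1 * τ * (c 2 + d 2) / (1 + 3 * (lam : ℂ) + 12 * (del : ℂ)) := by
  obtain ⟨F1, F2, F3⟩ := FCR.side f u φf a c B lam del τ hτ hfs ha0 ha1 hus hc0 hubd hφs hsub1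
  obtain ⟨G1, G2, G3⟩ := FCR.side g v φf A d B lam del τ hτ hgs hA0 hA1 hvs hd0 hvbd hφs hsub2
  refine ⟨F3, ?_, ?_⟩
  · rw [hA4] at G3
    linear_combination G3
  · have hK1 : ((1:ℂ) + (lam:ℂ) + 2*(del:ℂ)) ≠ 0 := by
      have h : (0:ℝ) < 1 + lam + 2*del := by linarith
      have h2 : ((1 + lam + 2*del : ℝ):ℂ) ≠ 0 := Complex.ofReal_ne_zero.mpr h.ne'
      intro hx; apply h2; push_cast; linear_combination hx
    have hK2 : ((1:ℂ) + 2*(lam:ℂ) + 6*(del:ℂ)) ≠ 0 := by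
      have h : (0:ℝ) < 1 + 2*lam + 6*del := by linarith
      have h2 : ((1 + 2*lam + 6*del : ℝ):ℂ) ≠ 0 := Complex.ofReal_ne_zero.mpr h.ne'
      intro hx; apply h2; push_cast; linear_combination hx
    have hK3 : ((1:ℂ) + 3*(lam:ℂ) + 12*(del:ℂ)) ≠ 0 := by
      have h : (0:ℝ) < 1 + 3*lam + 12*del := by linarith
      have h2 : ((1 + 3*lam + 12*del : ℝ):ℂ) ≠ 0 := Complex.ofReal_ne_zero.mpr h.ne'
      intro hx; apply h2; push_cast; linear_combination hx
    have hB1' : (B 1 : ℂ) ≠ 0 := Complex.ofReal_ne_zero.mpr (ne_of_gt hB1)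
    have F1' : (1 + (lam:ℂ) + 2*(del:ℂ)) * a 2 = (B 1:ℂ) * c 1 * τ := by
      rw [div_mul_eq_mul_div, div_eq_iff hτ] at F1; linear_combination F1
    have G1' : (1 + (lam:ℂ) + 2*(del:ℂ)) * A 2 = (B 1:ℂ) * d 1 * τ := by
      rw [div_mul_eq_mul_div, div_eq_iff hτ] at G1; linear_combination G1
    have hd1c : d 1 = -c 1 := by
      have hmul : (B 1:ℂ) * τ ≠ 0 := mul_ne_zero hB1' hτ
      have hh : (B 1:ℂ) * τ * d 1 = (B 1:ℂ) * τ * (-c 1) := by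
        rw [hA2] at G1'
        linear_combination -G1' - F1'
      exact mul_left_cancel₀ hmul hh
    have F2' : (1 + 2*(lam:ℂ) + 6*(del:ℂ)) * a 3
        = ((B 1:ℂ) * c 2 + (B 2:ℂ)*(c 1)^2) * τ := by
      rw [div_mul_eq_mul_div, div_eq_iff hτ] at F2; linear_combination F2
    have G2' : (1 + 2*(lam:ℂ) + 6*(del:ℂ)) * A 3
        = ((B 1:ℂ) * d 2 + (B 2:ℂ)*(d 1)^2) * τ := by
      rw [div_mul_eq_mul_div, div_eq_iff hτ] at G2; linear_combination G2
    have F3' : (1 + 3*(lam:ℂ) + 12*(del:ℂ)) * a 4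
        = ((B 1:ℂ)*c 3 + 2*(B 2:ℂ)*c 1*c 2 + (B 3:ℂ)*(c 1)^3) * τ := by
      rw [div_mul_eq_mul_div, div_eq_iff hτ] at F3; linear_combination F3
    have G3' : (1 + 3*(lam:ℂ) + 12*(del:ℂ)) * A 4
        = ((B 1:ℂ)*d 3 + 2*(B 2:ℂ)*d 1*d 2 + (B 3:ℂ)*(d 1)^3) * τ := by
      rw [div_mul_eq_mul_div, div_eq_iff hτ] at G3; linear_combination G3
    have H2 : 2*(1 + 2*(lam:ℂ) + 6*(del:ℂ)) * (a 3 - a 2^2)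
        = τ * ((B 1:ℂ) * (c 2 - d 2)) := by
      rw [hA3, hd1c] at G2'
      linear_combination F2' - G2'
    have H3 : (1 + 3*(lam:ℂ) + 12*(del:ℂ)) * (2*a 4 + 5*a 2^3 - 5*a 2*a 3)
        = τ * ((B 1:ℂ)*(c 3 - d 3) + 2*(B 2:ℂ)*c 1*(c 2 + d 2) + 2*(B 3:ℂ)*(c 1)^3) := by
      rw [hA4, hd1c] at G3'
      linear_combination F3' - G3'
    set K1 : ℂ := 1 + (lam:ℂ) + 2*(del:ℂ) with hK1d
    set K2 : ℂ := 1 + 2*(lam:ℂ) + 6*(del:ℂ) with hK2d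
    set K3 : ℂ := 1 + 3*(lam:ℂ) + 12*(del:ℂ) with hK3d
    have key : 4*K1*K2*K3 * a 4 = 5*(B 1:ℂ)^2*c 1*τ^2*(c 2 - d 2)*K3
        + 2*(B 1:ℂ)*τ*(c 3 - d 3)*K1*K2 + 4*(B 3:ℂ)*(c 1)^3*τ*K1*K2
        + 4*(B 2:ℂ)*c 1*τ*(c 2 + d 2)*K1*K2 := by
      linear_combination (2*K1*K2)*H3 + (5*K1*K3*(a 2))*H2 + (5*K3*τ*(B 1:ℂ)*(c 2 - d 2))*F1'
    have hden : (4:ℂ)*K1*K2*K3 ≠ 0 := by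
      refine mul_ne_zero (mul_ne_zero (mul_ne_zero ?_ hK1) hK2) hK3
      norm_num
    have h4 : a 4 = (5*(B 1:ℂ)^2*c 1*τ^2*(c 2 - d 2)*K3
        + 2*(B 1:ℂ)*τ*(c 3 - d 3)*K1*K2 + 4*(B 3:ℂ)*(c 1)^3*τ*K1*K2
        + 4*(B 2:ℂ)*c 1*τ*(c 2 + d 2)*K1*K2) / (4*K1*K2*K3) := by
      rw [eq_div_iff hden]
      linear_combination key
    have hden1 : (4:ℂ)*K1*K2 ≠ 0 := by
      refine mul_ne_zero (mul_ne_zero ?_ hK1) hK2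
      norm_num
    have hden2 : (2:ℂ)*K3 ≠ 0 := mul_ne_zero (by norm_num) hK3
    have t1 : 5 * (B 1:ℂ) ^ 2 * c 1 * τ ^ 2 * (c 2 - d 2) / (4 * K1 * K2)
        = (5*(B 1:ℂ)^2*c 1*τ^2*(c 2 - d 2)*K3) / (4*K1*K2*K3) := by
      rw [div_eq_div_iff hden1 hden]; ring
    have t2 : (B 1:ℂ) * τ * (c 3 - d 3) / (2 * K3)
        = (2*(B 1:ℂ)*τ*(c 3 - d 3)*K1*K2) / (4*K1*K2*K3) := by
      rw [div_eq_div_iff hden2 hden]; ring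
    have t3 : (B 3:ℂ) * (c 1) ^ 3 * τ / K3
        = (4*(B 3:ℂ)*(c 1)^3*τ*K1*K2) / (4*K1*K2*K3) := by
      rw [div_eq_div_iff hK3 hden]; ring
    have t4 : (B 2:ℂ) * c 1 * τ * (c 2 + d 2) / K3
        = (4*(B 2:ℂ)*c 1*τ*(c 2 + d 2)*K1*K2) / (4*K1*K2*K3) := by
      rw [div_eq_div_iff hK3 hden]; ring
    rw [t1, t2, t3, t4, ← add_div, ← add_div, ← add_div, h4]
end

section
/- Let f ∈ N_σ^α, i.e. f is bi-univalent with Re-type condition f'(z) ≺ ((1+z)/(1−z))^α and similarly for the inverse, 0 < α ≤ 1. Then |a₂a₄ − a₃²| ≤ 2α(|(4α³ − α)/12| + 25α/18 + 4α²/3). -/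
open Metric Nat Filter Complex FormalMultilinearSeries
open scoped NNReal Topology

lemma cauchy_coeff_bound (u : ℂ → ℂ) (hud : DifferentiableOn ℂ u (ball (0:ℂ) 1))
    (hub : ∀ z ∈ ball (0:ℂ) 1, ‖u z‖ < 1) (n : ℕ) :
    ‖iteratedDeriv n u 0‖ ≤ (n ! : ℝ) := by
  have key : ∀ r : ℝ, 0 < r → r < 1 → ‖iteratedDeriv n u 0‖ ≤ (n ! : ℝ) / r ^ n := by
    intro rr hr0 hr1
    lift rr to ℝ≥0 using hr0.le with r hrr
    replace hr0 : 0 < r := by exact_mod_cast hr0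
    have hsub : closedBall (0:ℂ) r ⊆ ball (0:ℂ) 1 := by
      intro z hz
      simp only [mem_closedBall, mem_ball] at hz ⊢
      exact lt_of_le_of_lt hz hr1
    have hsub2 : sphere (0:ℂ) r ⊆ ball (0:ℂ) 1 := fun z hz => hsub (sphere_subset_closedBall hz)
    have hps := (hud.mono hsub).hasFPowerSeriesOnBall (f := u) hr0
    have hfac := hps.factorial_smul (y := (1:ℂ)) n
    have h2 : iteratedDeriv n u 0 = (n ! : ℂ) • (cauchyPowerSeries u 0 r n fun _ => (1:ℂ)) := by
      rw [iteratedDeriv, ← hfac]; simp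
    have h3 : ‖cauchyPowerSeries u 0 r n fun _ => (1:ℂ)‖ ≤ ‖cauchyPowerSeries u 0 r n‖ := by
      have := (cauchyPowerSeries u 0 r n).le_opNorm (fun _ => (1:ℂ))
      simpa using this
    have h4 := norm_cauchyPowerSeries_le u 0 r n
    have hcont : Continuous fun θ : ℝ => ‖u (circleMap 0 r θ)‖ := by
      apply Continuous.norm
      exact hud.continuousOn.comp_continuous
        (continuous_circleMap 0 r) (fun θ => hsub2 (circleMap_mem_sphere _ r.2 _))
    have h5 : (∫ θ : ℝ in (0)..2 * Real.pi, ‖u (circleMap 0 r θ)‖) ≤ 2 * Real.pi := by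
      calc (∫ θ : ℝ in (0)..2 * Real.pi, ‖u (circleMap 0 r θ)‖)
          ≤ ∫ _ : ℝ in (0)..2 * Real.pi, (1:ℝ) := by
            apply intervalIntegral.integral_mono_on Real.two_pi_pos.le
              (hcont.intervalIntegrable _ _) (by simp)
            intro θ _
            exact (hub _ (hsub2 (circleMap_mem_sphere _ r.2 _))).le
        _ = 2 * Real.pi := by simp
    have h6 : ‖cauchyPowerSeries u 0 r n‖ ≤ ((r:ℝ))⁻¹ ^ n := by
      refine h4.trans ?_
      have habs : |(r:ℝ)| = (r:ℝ) := abs_of_pos hr0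
      rw [habs]
      have hle : (2 * Real.pi)⁻¹ * (∫ θ : ℝ in (0)..2 * Real.pi, ‖u (circleMap 0 r θ)‖) ≤ 1 := by
        rw [inv_mul_le_iff₀ Real.two_pi_pos]
        linarith [h5]
      have : (0:ℝ) ≤ ((r:ℝ))⁻¹ ^ n := by positivity
      nlinarith [this]
    rw [h2]
    rw [norm_smul]
    simp only [Complex.norm_natCast]
    calc (n ! : ℝ) * ‖cauchyPowerSeries u 0 r n fun _ => (1:ℂ)‖
        ≤ (n ! : ℝ) * ((r:ℝ))⁻¹ ^ n := by
          exact mul_le_mul_of_nonneg_left (h3.trans h6) (by positivity)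
      _ = (n ! : ℝ) / (r:ℝ) ^ n := by rw [inv_pow]; ring
  -- take limit r → 1⁻
  have htend : Tendsto (fun r : ℝ => (n ! : ℝ) / r ^ n) (𝓝[<] (1:ℝ)) (𝓝 ((n ! : ℝ))) := by
    have : Tendsto (fun r : ℝ => (n ! : ℝ) / r ^ n) (𝓝 (1:ℝ)) (𝓝 ((n ! : ℝ) / 1 ^ n)) := by
      apply Tendsto.div tendsto_const_nhds (by exact (continuous_pow n).tendsto 1) (by simp)
    simpa using this.mono_left nhdsWithin_le_nhds
  refine ge_of_tendsto htend ?_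
  filter_upwards [Ioo_mem_nhdsLT_of_mem (by simp : (1:ℝ) ∈ Set.Ioc 0 1)] with r hr
  exact key r hr.1 hr.2

lemma coeff_eq_iteratedDeriv_s16 (f : ℂ → ℂ) (a : ℕ → ℂ)
    (hfs : ∀ z ∈ ball (0 : ℂ) 1, HasSum (fun n : ℕ => a n * z ^ n) (f z)) (n : ℕ) :
    (n ! : ℂ) * a n = iteratedDeriv n f 0 := by
  set p : FormalMultilinearSeries ℂ ℂ ℂ := ofScalars ℂ a with hp
  have hhalf : ((2:ℂ)⁻¹ : ℂ) ∈ ball (0:ℂ) 1 := by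
    simp [mem_ball]
    norm_num
  have hsummable := (hfs _ hhalf).summable
  have hbdd : BddAbove (Set.range fun n => ‖a n * (2:ℂ)⁻¹ ^ n‖) := by
    have := hsummable.tendsto_atTop_zero.norm
    simpa using this.bddAbove_range
  obtain ⟨C, hC⟩ := hbdd
  have hrad : (2⁻¹ : ℝ≥0) ≤ p.radius := by
    apply le_radius_of_bound _ C
    intro m
    have h1 : ‖p m‖ ≤ ‖a m‖ := by
      simp only [hp, ofScalars]
      refine (norm_smul_le (a m) (ContinuousMultilinearMap.mkPiAlgebraFin ℂ m ℂ)).trans ?_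
      rw [ContinuousMultilinearMap.norm_mkPiAlgebraFin]
      simp
    calc ‖p m‖ * ((2⁻¹ : ℝ≥0):ℝ) ^ m ≤ ‖a m‖ * ((2⁻¹:ℝ)) ^ m := by
          apply mul_le_mul_of_nonneg_right h1 (by positivity) |>.trans
          norm_num
      _ = ‖a m * (2:ℂ)⁻¹ ^ m‖ := by
          rw [norm_mul, norm_pow]
          norm_num
      _ ≤ C := hC ⟨m, rfl⟩
  have hball : HasFPowerSeriesOnBall f p 0 (2⁻¹ : ℝ≥0) := by
    refine ⟨hrad, by norm_num, ?_⟩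
    intro y hy
    have hy1 : y ∈ ball (0:ℂ) 1 := by
      simp only [EMetric.mem_ball, edist_zero_right] at hy
      rw [mem_ball, _root_.dist_zero_right]
      have h2 : ‖y‖₊ < (2⁻¹ : ℝ≥0) := by exact_mod_cast hy
      have h3 : (‖y‖₊ : ℝ) < ((2⁻¹ : ℝ≥0) : ℝ) := by exact_mod_cast h2
      simp only [coe_nnnorm] at h3
      push_cast at h3
      linarith [h3]
    have := hfs y hy1
    simp only [zero_add]
    convert this using 2 with m
    · rfl
    rw [hp, ofScalars_apply_eq]
    simp [smul_eq_mul]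
  have hfac := hball.factorial_smul (y := (1:ℂ)) n
  have : p n (fun _ => (1:ℂ)) = a n := by
    rw [hp, ofScalars_apply_eq]; simp
  rw [iteratedDeriv, ← hfac, this]
  simp [mul_comm]


lemma cayley_re_pos {w : ℂ} (hw : ‖w‖ < 1) : 0 < ((1 + w) / (1 - w)).re := by
  have hns : Complex.normSq w < 1 := by
    rw [Complex.normSq_eq_norm_sq]
    have : ‖w‖ < 1 := hw
    nlinarith [norm_nonneg w]
  have hne : (1 : ℂ) - w ≠ 0 := by
    rw [sub_ne_zero]
    intro h
    rw [← h] at hw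
    simp at hw
  have hnsd : 0 < Complex.normSq (1 - w) := Complex.normSq_pos.mpr hne
  rw [Complex.div_re]
  have h1 : (1 + w).re * (1 - w).re + (1 + w).im * (1 - w).im = 1 - Complex.normSq w := by
    simp [Complex.normSq_apply]
    ring
  rw [← add_div, h1]
  apply _root_.div_pos (by linarith) hnsd

lemma cayley_ne_zero {w : ℂ} (hw : ‖w‖ < 1) : (1 + w) / (1 - w) ≠ 0 := by
  intro h
  have := cayley_re_pos hw
  rw [h] at this
  simp at this

lemma ode_identity (α : ℝ) (u f : ℂ → ℂ)
    (hud : DifferentiableOn ℂ u (ball (0:ℂ) 1))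
    (hub : ∀ z ∈ ball (0:ℂ) 1, ‖u z‖ < 1)
    (heq : ∀ z ∈ ball (0:ℂ) 1, deriv f z = ((1 + u z) / (1 - u z)) ^ (α : ℂ))
    {z : ℂ} (hz : z ∈ ball (0:ℂ) 1) :
    deriv (deriv f) z * (1 - u z ^ 2) =
      ((2 * α : ℝ) : ℂ) * (deriv u z * deriv f z) := by
  have hw : ‖u z‖ < 1 := hub z hz
  have hne : (1 : ℂ) - u z ≠ 0 := by
    rw [sub_ne_zero]; intro h; rw [← h] at hw; simp at hw
  have hne' : (1 : ℂ) + u z ≠ 0 := by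
    intro h
    have h2 : u z = -1 := by linear_combination h
    rw [h2] at hw; simp at hw
  have hb0 : (1 + u z) / (1 - u z) ≠ 0 := cayley_ne_zero hw
  have hu1 : HasDerivAt u (deriv u z) z :=
    ((hud.analyticOnNhd isOpen_ball z hz).differentiableAt).hasDerivAt
  have h1p : HasDerivAt (fun y => 1 + u y) (deriv u z) z := hu1.const_add 1
  have h1m : HasDerivAt (fun y => 1 - u y) (-(deriv u z)) z := hu1.const_sub 1
  have hq : HasDerivAt (fun y => (1 + u y) / (1 - u y))
      ((deriv u z * (1 - u z) - (1 + u z) * -(deriv u z)) / (1 - u z) ^ 2) z :=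
    h1p.div h1m hne
  have hcp : HasDerivAt (fun y => ((1 + u y) / (1 - u y)) ^ (α : ℂ))
      ((α : ℂ) * ((1 + u z) / (1 - u z)) ^ ((α : ℂ) - 1) *
        ((deriv u z * (1 - u z) - (1 + u z) * -(deriv u z)) / (1 - u z) ^ 2)) z :=
    hq.cpow_const (Complex.mem_slitPlane_iff.mpr (Or.inl (cayley_re_pos hw)))
  have hev : deriv f =ᶠ[𝓝 z] fun y => ((1 + u y) / (1 - u y)) ^ (α : ℂ) := by
    filter_upwards [isOpen_ball.mem_nhds hz] with y hy
    exact heq y hy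
  rw [hev.deriv_eq, hcp.deriv, heq z hz]
  have hbpow : ((1 + u z) / (1 - u z)) ^ ((α : ℂ) - 1) =
      ((1 + u z) / (1 - u z)) ^ (α : ℂ) / ((1 + u z) / (1 - u z)) := by
    rw [Complex.cpow_sub _ _ hb0, Complex.cpow_one]
  rw [hbpow]
  push_cast
  field_simp
  ring

set_option maxHeartbeats 1000000 in
theorem main_est (α : ℝ) (hα0 : 0 < α) (hα1 : α ≤ 1)
    (f : ℂ → ℂ) (a : ℕ → ℂ)
    (hfd : DifferentiableOn ℂ f (Metric.ball (0 : ℂ) 1))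
    (hfs : ∀ z ∈ Metric.ball (0 : ℂ) 1, HasSum (fun n : ℕ => a n * z ^ n) (f z))
    (u : ℂ → ℂ) (hud : DifferentiableOn ℂ u (Metric.ball (0:ℂ) 1)) (hu0 : u 0 = 0)
    (hub : ∀ z ∈ Metric.ball (0:ℂ) 1, ‖u z‖ < 1)
    (heq : ∀ z ∈ Metric.ball (0:ℂ) 1, deriv f z = ((1 + u z) / (1 - u z)) ^ (α : ℂ)) :
    ‖a 2 * a 4 - (a 3) ^ 2‖ ≤
      2 * α * (|(4 * α ^ 3 - α) / 12| + 25 * α / 18 + 4 * α ^ 2 / 3) := by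
  have h0B : (0:ℂ) ∈ ball (0:ℂ) 1 := by simp
  set C : ℂ := ((2 * α : ℝ) : ℂ) with hC
  -- analyticity
  have fa : AnalyticOnNhd ℂ f (ball (0:ℂ) 1) := hfd.analyticOnNhd isOpen_ball
  have ua : AnalyticOnNhd ℂ u (ball (0:ℂ) 1) := hud.analyticOnNhd isOpen_ball
  have f1a : AnalyticOnNhd ℂ (deriv f) (ball (0:ℂ) 1) := fa.deriv
  have f2a : AnalyticOnNhd ℂ (deriv (deriv f)) (ball (0:ℂ) 1) := f1a.deriv
  have f3a : AnalyticOnNhd ℂ (deriv (deriv (deriv f))) (ball (0:ℂ) 1) := f2a.deriv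
  have u1a : AnalyticOnNhd ℂ (deriv u) (ball (0:ℂ) 1) := ua.deriv
  have u2a : AnalyticOnNhd ℂ (deriv (deriv u)) (ball (0:ℂ) 1) := u1a.deriv
  have Hu : ∀ z ∈ ball (0:ℂ) 1, HasDerivAt u (deriv u z) z :=
    fun z hz => ((ua z hz).differentiableAt).hasDerivAt
  have Hu1 : ∀ z ∈ ball (0:ℂ) 1, HasDerivAt (deriv u) (deriv (deriv u) z) z :=
    fun z hz => ((u1a z hz).differentiableAt).hasDerivAt
  have Hu2 : ∀ z ∈ ball (0:ℂ) 1, HasDerivAt (deriv (deriv u)) (deriv (deriv (deriv u)) z) z :=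
    fun z hz => ((u2a z hz).differentiableAt).hasDerivAt
  have Hf1 : ∀ z ∈ ball (0:ℂ) 1, HasDerivAt (deriv f) (deriv (deriv f) z) z :=
    fun z hz => ((f1a z hz).differentiableAt).hasDerivAt
  have Hf2 : ∀ z ∈ ball (0:ℂ) 1, HasDerivAt (deriv (deriv f)) (deriv (deriv (deriv f)) z) z :=
    fun z hz => ((f2a z hz).differentiableAt).hasDerivAt
  have Hf3 : ∀ z ∈ ball (0:ℂ) 1,
      HasDerivAt (deriv (deriv (deriv f))) (deriv (deriv (deriv (deriv f))) z) z :=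
    fun z hz => ((f3a z hz).differentiableAt).hasDerivAt
  -- derivative of 1 - u^2
  have Hg2 : ∀ z ∈ ball (0:ℂ) 1,
      HasDerivAt (fun y => 1 - u y ^ 2) (-(2 * u z * deriv u z)) z := by
    intro z hz
    have h := ((Hu z hz).pow 2).const_sub 1
    refine h.congr_deriv ?_
    push_cast
    ring
  have ode : ∀ z ∈ ball (0:ℂ) 1, deriv (deriv f) z * (1 - u z ^ 2) =
      C * (deriv u z * deriv f z) :=
    fun z hz => ode_identity α u f hud hub heq hz
  -- first differentiated identity, valid on the ball
  have id2 : ∀ z ∈ ball (0:ℂ) 1,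
      deriv (deriv (deriv f)) z * (1 - u z ^ 2) + deriv (deriv f) z * -(2 * u z * deriv u z)
        = C * (deriv (deriv u) z * deriv f z + deriv u z * deriv (deriv f) z) := by
    intro z hz
    have hP : HasDerivAt (fun y => deriv (deriv f) y * (1 - u y ^ 2))
        (deriv (deriv (deriv f)) z * (1 - u z ^ 2) +
          deriv (deriv f) z * -(2 * u z * deriv u z)) z :=
      (Hf2 z hz).mul (Hg2 z hz)
    have hQ : HasDerivAt (fun y => C * (deriv u y * deriv f y))
        (C * (deriv (deriv u) z * deriv f z + deriv u z * deriv (deriv f) z)) z :=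
      ((Hu1 z hz).mul (Hf1 z hz)).const_mul C
    have hder : deriv (fun y => deriv (deriv f) y * (1 - u y ^ 2)) z
        = deriv (fun y => C * (deriv u y * deriv f y)) z := by
      apply Filter.EventuallyEq.deriv_eq
      filter_upwards [isOpen_ball.mem_nhds hz] with y hy
      exact ode y hy
    rw [← hP.deriv, ← hQ.deriv]
    exact hder
  -- second differentiated identity, at 0 only
  have id3 : deriv (deriv (deriv (deriv f))) 0 * (1 - u 0 ^ 2)
        + deriv (deriv (deriv f)) 0 * -(2 * u 0 * deriv u 0)
        + (deriv (deriv (deriv f)) 0 * -(2 * u 0 * deriv u 0)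
          + deriv (deriv f) 0 * -(2 * deriv u 0 * deriv u 0 + 2 * u 0 * deriv (deriv u) 0))
      = C * ((deriv (deriv (deriv u)) 0 * deriv f 0 + deriv (deriv u) 0 * deriv (deriv f) 0)
        + (deriv (deriv u) 0 * deriv (deriv f) 0 + deriv u 0 * deriv (deriv (deriv f)) 0)) := by
    have hg3 : HasDerivAt (fun y => -(2 * u y * deriv u y))
        (-(2 * deriv u 0 * deriv u 0 + 2 * u 0 * deriv (deriv u) 0)) 0 := by
      have hm : HasDerivAt (fun y => 2 * u y) (2 * deriv u 0) 0 := (Hu 0 h0B).const_mul 2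
      have := (hm.mul (Hu1 0 h0B)).neg
      exact this
    have hP2 : HasDerivAt
        (fun y => deriv (deriv (deriv f)) y * (1 - u y ^ 2)
          + deriv (deriv f) y * -(2 * u y * deriv u y))
        (deriv (deriv (deriv (deriv f))) 0 * (1 - u 0 ^ 2)
          + deriv (deriv (deriv f)) 0 * -(2 * u 0 * deriv u 0)
          + (deriv (deriv (deriv f)) 0 * -(2 * u 0 * deriv u 0)
            + deriv (deriv f) 0 * -(2 * deriv u 0 * deriv u 0 + 2 * u 0 * deriv (deriv u) 0))) 0 :=
      ((Hf3 0 h0B).mul (Hg2 0 h0B)).add ((Hf2 0 h0B).mul hg3)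
    have hQ2 : HasDerivAt
        (fun y => C * (deriv (deriv u) y * deriv f y + deriv u y * deriv (deriv f) y))
        (C * ((deriv (deriv (deriv u)) 0 * deriv f 0 + deriv (deriv u) 0 * deriv (deriv f) 0)
          + (deriv (deriv u) 0 * deriv (deriv f) 0 + deriv u 0 * deriv (deriv (deriv f)) 0))) 0 :=
      (((Hu2 0 h0B).mul (Hf1 0 h0B)).add ((Hu1 0 h0B).mul (Hf2 0 h0B))).const_mul C
    have hder : deriv (fun y => deriv (deriv (deriv f)) y * (1 - u y ^ 2)
          + deriv (deriv f) y * -(2 * u y * deriv u y)) 0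
        = deriv (fun y => C * (deriv (deriv u) y * deriv f y
          + deriv u y * deriv (deriv f) y)) 0 := by
      apply Filter.EventuallyEq.deriv_eq
      filter_upwards [isOpen_ball.mem_nhds h0B] with y hy
      exact id2 y hy
    rw [← hP2.deriv, ← hQ2.deriv]
    exact hder
  -- values at 0
  have hf10 : deriv f 0 = 1 := by
    rw [heq 0 h0B, hu0]
    norm_num [Complex.one_cpow]
  have hCnorm : ‖C‖ = 2 * α := by
    rw [hC, Complex.norm_real]
    rw [Real.norm_eq_abs, abs_of_pos (by linarith)]
  -- coefficient identities
  have hI1 : deriv (deriv f) 0 = C * deriv u 0 := by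
    have h := ode 0 h0B
    rw [hu0, hf10] at h
    linear_combination h
  have hI2 : deriv (deriv (deriv f)) 0 =
      C * (deriv (deriv u) 0 + deriv u 0 * deriv (deriv f) 0) := by
    have h := id2 0 h0B
    rw [hu0, hf10] at h
    linear_combination h
  have hI3 : deriv (deriv (deriv (deriv f))) 0 =
      C * (deriv (deriv (deriv u)) 0 + 2 * (deriv (deriv u) 0 * deriv (deriv f) 0)
        + deriv u 0 * deriv (deriv (deriv f)) 0)
      + 2 * (deriv u 0 * deriv u 0) * deriv (deriv f) 0 := by
    have h := id3
    rw [hu0, hf10] at h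
    linear_combination h
  -- Cauchy bounds on derivatives of u at 0
  have hU1 : ‖deriv u 0‖ ≤ 1 := by
    have h := cauchy_coeff_bound u hud hub 1
    rw [iteratedDeriv_one] at h
    norm_num [Nat.factorial] at h
    exact h
  have hU2 : ‖deriv (deriv u) 0‖ ≤ 2 := by
    have h := cauchy_coeff_bound u hud hub 2
    rw [show iteratedDeriv 2 u = deriv (deriv u) by
      rw [iteratedDeriv_succ, iteratedDeriv_one]] at h
    norm_num [Nat.factorial] at h
    exact h
  have hU3 : ‖deriv (deriv (deriv u)) 0‖ ≤ 6 := by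
    have h := cauchy_coeff_bound u hud hub 3
    rw [show iteratedDeriv 3 u = deriv (deriv (deriv u)) by
      rw [iteratedDeriv_succ, iteratedDeriv_succ, iteratedDeriv_one]] at h
    norm_num [Nat.factorial] at h
    exact h
  -- norms of H's
  set n1 : ℝ := ‖deriv (deriv f) 0‖ with hn1def
  set n2 : ℝ := ‖deriv (deriv (deriv f)) 0‖ with hn2def
  set n3 : ℝ := ‖deriv (deriv (deriv (deriv f))) 0‖ with hn3def
  have hn1 : n1 ≤ 2 * α := by
    rw [hn1def, hI1, norm_mul, hCnorm]
    nlinarith [norm_nonneg (deriv u 0)]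
  have hn2 : n2 ≤ 2 * α * (2 + 1 * n1) := by
    rw [hn2def, hI2, norm_mul, hCnorm]
    have h1 : ‖deriv (deriv u) 0 + deriv u 0 * deriv (deriv f) 0‖
        ≤ 2 + 1 * n1 := by
      refine (norm_add_le _ _).trans ?_
      rw [norm_mul]
      have := norm_nonneg (deriv (deriv f) 0)
      nlinarith [norm_nonneg (deriv u 0), norm_nonneg (deriv (deriv u) 0)]
    nlinarith [norm_nonneg (deriv (deriv u) 0 + deriv u 0 * deriv (deriv f) 0)]
  have hn3 : n3 ≤ 2 * α * (6 + 2 * (2 * n1) + 1 * n2) + 2 * n1 := by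
    rw [hn3def, hI3]
    refine (norm_add_le _ _).trans ?_
    have h1 : ‖C * (deriv (deriv (deriv u)) 0 + 2 * (deriv (deriv u) 0 * deriv (deriv f) 0)
        + deriv u 0 * deriv (deriv (deriv f)) 0)‖ ≤ 2 * α * (6 + 2 * (2 * n1) + 1 * n2) := by
      rw [norm_mul, hCnorm]
      have h2 : ‖deriv (deriv (deriv u)) 0 + 2 * (deriv (deriv u) 0 * deriv (deriv f) 0)
          + deriv u 0 * deriv (deriv (deriv f)) 0‖ ≤ 6 + 2 * (2 * n1) + 1 * n2 := by
        refine (norm_add_le _ _).trans ?_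
        have h3 := norm_add_le (deriv (deriv (deriv u)) 0)
          (2 * (deriv (deriv u) 0 * deriv (deriv f) 0))
        have h3b : ‖(2:ℂ) * (deriv (deriv u) 0 * deriv (deriv f) 0)‖
            = 2 * (‖deriv (deriv u) 0‖ * ‖deriv (deriv f) 0‖) := by
          rw [norm_mul, norm_mul]
          norm_num
        have h3c : ‖deriv u 0 * deriv (deriv (deriv f)) 0‖
            = ‖deriv u 0‖ * ‖deriv (deriv (deriv f)) 0‖ := norm_mul _ _
        rw [h3b] at h3
        rw [h3c]
        nlinarith [norm_nonneg (deriv (deriv u) 0), norm_nonneg (deriv u 0),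
          norm_nonneg (deriv (deriv f) 0), norm_nonneg (deriv (deriv (deriv f)) 0),
          norm_nonneg (deriv (deriv (deriv u)) 0)]
      nlinarith [norm_nonneg (deriv (deriv (deriv u)) 0
        + 2 * (deriv (deriv u) 0 * deriv (deriv f) 0)
        + deriv u 0 * deriv (deriv (deriv f)) 0)]
    have h4 : ‖2 * (deriv u 0 * deriv u 0) * deriv (deriv f) 0‖ ≤ 2 * n1 := by
      have h5 : ‖(2:ℂ) * (deriv u 0 * deriv u 0) * deriv (deriv f) 0‖
          = 2 * (‖deriv u 0‖ * ‖deriv u 0‖) * ‖deriv (deriv f) 0‖ := by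
        rw [norm_mul, norm_mul, norm_mul]
        norm_num
      rw [h5]
      have h6 : ‖deriv u 0‖ * ‖deriv u 0‖ ≤ 1 := by
        nlinarith [norm_nonneg (deriv u 0)]
      nlinarith [norm_nonneg (deriv (deriv f) 0)]
    linarith
  -- coefficients in terms of derivatives
  have ha2 : (2 : ℂ) * a 2 = deriv (deriv f) 0 := by
    have h := coeff_eq_iteratedDeriv_s16 f a hfs 2
    rw [show iteratedDeriv 2 f = deriv (deriv f) by
      rw [iteratedDeriv_succ, iteratedDeriv_one]] at h
    norm_num [Nat.factorial] at h
    exact_mod_cast h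
  have ha3 : (6 : ℂ) * a 3 = deriv (deriv (deriv f)) 0 := by
    have h := coeff_eq_iteratedDeriv_s16 f a hfs 3
    rw [show iteratedDeriv 3 f = deriv (deriv (deriv f)) by
      rw [iteratedDeriv_succ, iteratedDeriv_succ, iteratedDeriv_one]] at h
    norm_num [Nat.factorial] at h
    exact_mod_cast h
  have ha4 : (24 : ℂ) * a 4 = deriv (deriv (deriv (deriv f))) 0 := by
    have h := coeff_eq_iteratedDeriv_s16 f a hfs 4
    rw [show iteratedDeriv 4 f = deriv (deriv (deriv (deriv f))) by
      rw [iteratedDeriv_succ, iteratedDeriv_succ, iteratedDeriv_succ, iteratedDeriv_one]] at h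
    norm_num [Nat.factorial] at h
    exact_mod_cast h
  have ha2n : ‖a 2‖ = n1 / 2 := by
    rw [hn1def, ← ha2, norm_mul]
    simp only [Complex.norm_ofNat]
    ring
  have ha3n : ‖a 3‖ = n2 / 6 := by
    rw [hn2def, ← ha3, norm_mul]
    norm_num
  have ha4n : ‖a 4‖ = n3 / 24 := by
    rw [hn3def, ← ha4, norm_mul]
    norm_num
  have hb : ‖a 2 * a 4 - a 3 ^ 2‖ ≤ n1 / 2 * (n3 / 24) + (n2 / 6) ^ 2 := by
    refine (norm_sub_le _ _).trans ?_
    rw [norm_mul, norm_pow, ha2n, ha3n, ha4n]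
  refine hb.trans ?_
  have hn1' : 0 ≤ n1 := norm_nonneg _
  have hn2' : 0 ≤ n2 := norm_nonneg _
  have hn3' : 0 ≤ n3 := norm_nonneg _
  have hN2 : n2 ≤ 4 * α + 4 * α ^ 2 := by nlinarith
  have hN3 : n3 ≤ 16 * α + 24 * α ^ 2 + 8 * α ^ 3 := by
    nlinarith [mul_le_mul_of_nonneg_left hn1 hα0.le, mul_le_mul_of_nonneg_left hN2 hα0.le]
  have t1 : n1 / 2 * (n3 / 24) ≤ (2 * α) / 2 * ((16 * α + 24 * α ^ 2 + 8 * α ^ 3) / 24) := by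
    have := mul_le_mul hn1 hN3 hn3' (by linarith : (0:ℝ) ≤ 2 * α)
    nlinarith
  have t2 : (n2 / 6) ^ 2 ≤ ((4 * α + 4 * α ^ 2) / 6) ^ 2 := by
    have := mul_le_mul hN2 hN2 hn2' (by positivity : (0:ℝ) ≤ 4 * α + 4 * α ^ 2)
    nlinarith
  have key : (2 * α) / 2 * ((16 * α + 24 * α ^ 2 + 8 * α ^ 3) / 24)
      + ((4 * α + 4 * α ^ 2) / 6) ^ 2
      ≤ 2 * α * (|(4 * α ^ 3 - α) / 12| + 25 * α / 18 + 4 * α ^ 2 / 3) := by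
    rcases abs_cases ((4 * α ^ 3 - α) / 12) with ⟨habs, _⟩ | ⟨habs, _⟩ <;> rw [habs] <;>
      nlinarith [sq_nonneg α, sq_nonneg (α - 1), sq_nonneg (α * α - α), mul_pos hα0 hα0,
        pow_le_one₀ hα0.le hα1 (n := 2), mul_pos (mul_pos hα0 hα0) hα0]
  linarith

/-- Corrected bound for the class `N_σ^α` (`Çağlar et al.`, Theorem 1): if `f` is
bi-univalent with `f' ≺ ((1+z)/(1-z))^α` and likewise for the inverse `g`, `0 < α ≤ 1`,
then `|a₂a₄ - a₃²| ≤ 2α(|(4α³-α)/12| + 25α/18 + 4α²/3)`. -/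
theorem hankel_bound_N_alpha (α : ℝ) (hα0 : 0 < α) (hα1 : α ≤ 1)
    (f g : ℂ → ℂ) (a : ℕ → ℂ)
    (hfd : DifferentiableOn ℂ f (Metric.ball (0 : ℂ) 1))
    (hfinj : Set.InjOn f (Metric.ball (0 : ℂ) 1))
    (hfs : ∀ z ∈ Metric.ball (0 : ℂ) 1, HasSum (fun n : ℕ => a n * z ^ n) (f z))
    (ha0 : a 0 = 0) (ha1 : a 1 = 1)
    (hgd : DifferentiableOn ℂ g (Metric.ball (0 : ℂ) 1))
    (hginj : Set.InjOn g (Metric.ball (0 : ℂ) 1))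
    (hinv : ∃ r > (0 : ℝ), ∀ z ∈ Metric.ball (0 : ℂ) r, g (f z) = z)
    (hsub1 : ∃ u : ℂ → ℂ, DifferentiableOn ℂ u (Metric.ball (0 : ℂ) 1) ∧ u 0 = 0 ∧
      (∀ z ∈ Metric.ball (0 : ℂ) 1, ‖u z‖ < 1) ∧
      ∀ z ∈ Metric.ball (0 : ℂ) 1, deriv f z = ((1 + u z) / (1 - u z)) ^ (α : ℂ))
    (hsub2 : ∃ v : ℂ → ℂ, DifferentiableOn ℂ v (Metric.ball (0 : ℂ) 1) ∧ v 0 = 0 ∧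
      (∀ w ∈ Metric.ball (0 : ℂ) 1, ‖v w‖ < 1) ∧
      ∀ w ∈ Metric.ball (0 : ℂ) 1, deriv g w = ((1 + v w) / (1 - v w)) ^ (α : ℂ)) :
    ‖a 2 * a 4 - (a 3) ^ 2‖ ≤
      2 * α * (|(4 * α ^ 3 - α) / 12| + 25 * α / 18 + 4 * α ^ 2 / 3) := by
  obtain ⟨u, hud, hu0, hub, heq⟩ := hsub1
  exact main_est α hα0 hα1 f a hfd hfs u hud hu0 hub heq
end

section
/- Let f ∈ N_σ(β) with 0 ≤ β < 1, i.e. f bi-univalent with Re f'(z) > β and Re g'(w) > β for the inverse g. Then |a₂a₄ − a₃²| ≤ 2(1−β)²(49/18 − β/3 + |1/4 − (1−β)²/2|). -/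
open scoped NNReal ENNReal
open Filter Metric in
lemma lemA (f : ℂ → ℂ) (a : ℕ → ℂ)
    (hfs : ∀ z ∈ Metric.ball (0 : ℂ) 1, HasSum (fun n : ℕ => a n * z ^ n) (f z)) (n : ℕ) :
    iteratedDeriv n f 0 = (n.factorial : ℂ) * a n := by
  have hhalf : ((1/2 : ℝ≥0) : ℝ≥0∞) = 1/2 := by
    rw [ENNReal.coe_div (by norm_num)]
    norm_num
  have hz : ((1/2 : ℝ) : ℂ) ∈ Metric.ball (0:ℂ) 1 := by
    rw [Metric.mem_ball, dist_zero_right, Complex.norm_real, Real.norm_eq_abs, abs_lt]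
    constructor <;> norm_num
  have hsum := (hfs _ hz).summable
  have h0 : Tendsto (fun m : ℕ => ‖a m * ((1/2:ℝ):ℂ) ^ m‖) atTop (nhds 0) := by
    simpa using hsum.tendsto_atTop_zero.norm
  have hrad : ((1/2 : ℝ≥0) : ℝ≥0∞) ≤ (FormalMultilinearSeries.ofScalars ℂ a).radius := by
    apply FormalMultilinearSeries.le_radius_of_tendsto (l := 0)
    convert h0 using 2 with m
    rw [FormalMultilinearSeries.ofScalars_norm]
    simp [norm_mul, norm_pow, Complex.norm_real]
  have hball : HasFPowerSeriesOnBall f (FormalMultilinearSeries.ofScalars ℂ a) 0 (1/2) := by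
    constructor
    · rw [← hhalf]
      exact hrad
    · norm_num
    · intro y hy
      have hy1 : y ∈ Metric.ball (0:ℂ) 1 := by
        rw [Metric.mem_ball, dist_zero_right]
        have h1 : (‖y‖₊ : ℝ≥0∞) < 1/2 := by simpa [enorm_eq_nnnorm] using hy
        rw [← hhalf] at h1
        have h3 : ‖y‖₊ < (1/2 : ℝ≥0) := ENNReal.coe_lt_coe.mp h1
        have h2 : ‖y‖ < ((1/2 : ℝ≥0) : ℝ) := by exact_mod_cast h3
        simpa using h2.trans (by norm_num)
      simp only [FormalMultilinearSeries.ofScalars_apply_eq, smul_eq_mul, zero_add]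
      exact hfs y hy1
  have h := hball.factorial_smul (1:ℂ) n
  simp only [FormalMultilinearSeries.ofScalars_apply_eq, one_pow, smul_eq_mul, mul_one,
    nsmul_eq_mul] at h
  rw [iteratedDeriv_eq_iteratedFDeriv, ← h]


open scoped NNReal ENNReal Real
open Filter Metric intervalIntegral in
lemma lemB (w : ℂ → ℂ) (hw : DifferentiableOn ℂ w (Metric.ball (0 : ℂ) 1))
    (hb : ∀ z ∈ Metric.ball (0 : ℂ) 1, ‖w z‖ ≤ 1) (n : ℕ) :
    ‖iteratedDeriv n w 0‖ ≤ (n.factorial : ℝ) := by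
  have key : ∀ r : ℝ, 0 < r → r < 1 → ‖iteratedDeriv n w 0‖ ≤ (n.factorial : ℝ) / r ^ n := by
    intro r hr0 hr1
    set r' : ℝ≥0 := ⟨r, hr0.le⟩ with hr'
    have hrc : ((r' : ℝ≥0) : ℝ) = r := rfl
    have hsub : Metric.closedBall (0:ℂ) r' ⊆ Metric.ball (0:ℂ) 1 :=
      Metric.closedBall_subset_ball (by rw [hrc]; exact hr1)
    have hball := (hw.mono hsub).hasFPowerSeriesOnBall (by exact_mod_cast hr0)
    have h := hball.factorial_smul (1:ℂ) n
    have hnorm1 : ‖iteratedDeriv n w 0‖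
        = (n.factorial : ℝ) * ‖cauchyPowerSeries w 0 r' n (fun _ => 1)‖ := by
      rw [iteratedDeriv_eq_iteratedFDeriv, ← h, nsmul_eq_mul, norm_mul]
      simp
    -- bound the integral
    have hcont : Continuous fun θ : ℝ => w (circleMap 0 r θ) := by
      apply hw.continuousOn.comp_continuous (continuous_circleMap 0 r)
      intro θ
      rw [Metric.mem_ball, dist_zero_right, norm_circleMap_zero,
        abs_of_pos hr0]
      exact hr1
    have hmem : ∀ θ : ℝ, circleMap 0 r θ ∈ Metric.ball (0:ℂ) 1 := by
      intro θ
      rw [Metric.mem_ball, dist_zero_right, norm_circleMap_zero,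
        abs_of_pos hr0]
      exact hr1
    have hint : (∫ θ : ℝ in (0)..(2*π), ‖w (circleMap 0 r θ)‖) ≤ 2*π := by
      have h1 := intervalIntegral.integral_mono_on (μ := MeasureTheory.volume)
        (by positivity : (0:ℝ) ≤ 2*π)
        (hcont.norm.intervalIntegrable 0 (2*π)) (_root_.intervalIntegrable_const (c := (1:ℝ)))
        (fun θ _ => hb _ (hmem θ))
      simpa using h1
    have hcoef : ‖cauchyPowerSeries w 0 r' n (fun _ => 1)‖ ≤ r⁻¹ ^ n := by
      have h1 : ‖cauchyPowerSeries w 0 r' n (fun _ => 1)‖ ≤ ‖cauchyPowerSeries w 0 r' n‖ := by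
        have := (cauchyPowerSeries w 0 r' n).le_opNorm (fun _ => (1:ℂ))
        simpa using this
      refine h1.trans ?_
      have h2 := norm_cauchyPowerSeries_le w 0 r' n
      rw [hrc] at h2
      refine h2.trans ?_
      rw [abs_of_pos hr0]
      have h3 : (2*π)⁻¹ * (∫ θ : ℝ in (0)..(2*π), ‖w (circleMap 0 r θ)‖) ≤ 1 := by
        rw [inv_mul_le_iff₀ (by positivity)]
        linarith [Real.pi_pos, hint]
      calc (2*π)⁻¹ * (∫ θ : ℝ in (0)..(2*π), ‖w (circleMap 0 r θ)‖) * r⁻¹ ^ n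
          ≤ 1 * r⁻¹ ^ n := by
            apply mul_le_mul_of_nonneg_right h3 (by positivity)
        _ = r⁻¹ ^ n := one_mul _
    rw [hnorm1, div_eq_mul_inv, ← inv_pow]
    exact mul_le_mul_of_nonneg_left hcoef (by positivity)
  -- pass to the limit r → 1
  have h2 : Tendsto (fun m : ℕ => (1/(m+2) : ℝ)) atTop (nhds 0) := by
    have := tendsto_one_div_add_atTop_nhds_zero_nat (𝕜 := ℝ)
    have hcomp := this.comp (tendsto_add_atTop_nat 1)
    convert hcomp using 2 with m
    simp [Function.comp]
    push_cast
    ring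
  have h3 : Tendsto (fun m : ℕ => (1 - 1/(m+2) : ℝ)) atTop (nhds 1) := by
    simpa using tendsto_const_nhds.sub h2
  have htend : Tendsto (fun m : ℕ => (n.factorial : ℝ) / (1 - 1/(m+2) : ℝ) ^ n) atTop
      (nhds ((n.factorial : ℝ) / 1 ^ n)) :=
    tendsto_const_nhds.div (h3.pow n) (by norm_num)
  have hev : ∀ m : ℕ, ‖iteratedDeriv n w 0‖ ≤ (n.factorial : ℝ) / (1 - 1/(m+2) : ℝ) ^ n := by
    intro m
    have hm2 : (0:ℝ) < (m:ℝ) + 2 := by positivity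
    have hlt : (1:ℝ)/(m+2) < 1 := by
      rw [div_lt_one hm2]; linarith
    have hpos : (0:ℝ) < 1/(m+2) := by positivity
    exact key _ (by linarith) (by linarith)
  have := ge_of_tendsto htend (Filter.Eventually.of_forall hev)
  simpa using this



open Metric Set in
lemma core (t : ℝ) (ht0 : 0 < t) (F : ℂ → ℂ)
    (hA : AnalyticOnNhd ℂ F (Metric.ball (0:ℂ) 1))
    (hF0 : F 0 = 1)
    (hre : ∀ z ∈ Metric.ball (0:ℂ) 1, 1 - t < (F z).re) :
    ‖deriv F 0‖ ≤ 2*t ∧ ‖deriv (deriv F) 0‖ ≤ 8*t ∧ ‖deriv (deriv (deriv F)) 0‖ ≤ 48*t := by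
  have hD : IsOpen (Metric.ball (0:ℂ) 1) := Metric.isOpen_ball
  have h0D : (0:ℂ) ∈ Metric.ball (0:ℂ) 1 := by simp
  set c : ℂ := ((2*t - 1 : ℝ) : ℂ) with hc
  -- denominator has positive real part
  have hql : ∀ z ∈ Metric.ball (0:ℂ) 1, t < (F z + c).re := by
    intro z hz
    have := hre z hz
    rw [Complex.add_re, hc, Complex.ofReal_re]
    linarith
  have hqne : ∀ z ∈ Metric.ball (0:ℂ) 1, F z + c ≠ 0 := by
    intro z hz h
    have := hql z hz
    rw [h, Complex.zero_re] at this
    linarith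
  set w : ℂ → ℂ := fun z => (F z - 1) / (F z + c) with hwdef
  have hAq : AnalyticOnNhd ℂ (fun z => F z + c) (Metric.ball (0:ℂ) 1) :=
    fun z hz => (hA z hz).add analyticAt_const
  have hwA : AnalyticOnNhd ℂ w (Metric.ball (0:ℂ) 1) := by
    intro z hz
    exact ((hA z hz).sub analyticAt_const).div (hAq z hz) (hqne z hz)
  have hwb : ∀ z ∈ Metric.ball (0:ℂ) 1, ‖w z‖ ≤ 1 := by
    intro z hz
    have hqpos : 0 < ‖F z + c‖ := norm_pos_iff.mpr (hqne z hz)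
    rw [hwdef]
    simp only
    rw [norm_div, div_le_one hqpos]
    have h2 : ‖F z - 1‖^2 ≤ ‖F z + c‖^2 := by
      have hx := hre z hz
      rw [Complex.sq_norm, Complex.sq_norm,
        Complex.normSq_apply, Complex.normSq_apply]
      rw [Complex.sub_re, Complex.sub_im, Complex.add_re, Complex.add_im, hc,
        Complex.ofReal_re, Complex.ofReal_im, Complex.one_re, Complex.one_im]
      nlinarith [ht0, hx]
    calc ‖F z - 1‖ = Real.sqrt (‖F z - 1‖^2) := (Real.sqrt_sq (norm_nonneg _)).symm
      _ ≤ Real.sqrt (‖F z + c‖^2) := Real.sqrt_le_sqrt h2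
      _ = ‖F z + c‖ := Real.sqrt_sq (norm_nonneg _)
  have hw0 : w 0 = 0 := by
    rw [hwdef]; simp [hF0]
  -- coefficient bounds for w
  have hwd : DifferentiableOn ℂ w (Metric.ball (0:ℂ) 1) := hwA.differentiableOn
  have bd1 : ‖deriv w 0‖ ≤ 1 := by
    have := lemB w hwd hwb 1
    rwa [iteratedDeriv_one, Nat.factorial_one, Nat.cast_one] at this
  have bd2 : ‖deriv (deriv w) 0‖ ≤ 2 := by
    have := lemB w hwd hwb 2
    rw [iteratedDeriv_succ, iteratedDeriv_one] at this
    norm_num [Nat.factorial] at this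
    exact this
  have bd3 : ‖deriv (deriv (deriv w)) 0‖ ≤ 6 := by
    have := lemB w hwd hwb 3
    rw [iteratedDeriv_succ, iteratedDeriv_succ, iteratedDeriv_one] at this
    norm_num [Nat.factorial] at this
    exact this
  -- the key functional identity
  have hFeq : Set.EqOn F (fun z => w z * (F z + c) + 1) (Metric.ball (0:ℂ) 1) := by
    intro z hz
    rw [hwdef]
    simp only
    rw [div_mul_cancel₀ _ (hqne z hz), sub_add_cancel]
  have hEqD : ∀ {u v : ℂ → ℂ}, Set.EqOn u v (Metric.ball (0:ℂ) 1) →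
      Set.EqOn (deriv u) (deriv v) (Metric.ball (0:ℂ) 1) := by
    intro u v h z hz
    exact Filter.EventuallyEq.deriv_eq (Filter.eventuallyEq_of_mem (hD.mem_nhds hz) h)
  have hA1 : AnalyticOnNhd ℂ (deriv F) (Metric.ball (0:ℂ) 1) := hA.deriv
  have hA2 : AnalyticOnNhd ℂ (deriv (deriv F)) (Metric.ball (0:ℂ) 1) := hA1.deriv
  have hw1A : AnalyticOnNhd ℂ (deriv w) (Metric.ball (0:ℂ) 1) := hwA.deriv
  have hw2A : AnalyticOnNhd ℂ (deriv (deriv w)) (Metric.ball (0:ℂ) 1) := hw1A.deriv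
  -- first derivative
  have e1 : Set.EqOn (deriv F)
      (fun z => deriv w z * (F z + c) + w z * deriv F z) (Metric.ball (0:ℂ) 1) := by
    intro z hz
    rw [hEqD hFeq hz, deriv_add_const,
      deriv_fun_mul (hwA z hz).differentiableAt (hAq z hz).differentiableAt, deriv_add_const]
  -- second derivative
  have e2 : Set.EqOn (deriv (deriv F))
      (fun z => (deriv (deriv w) z * (F z + c) + deriv w z * deriv F z) +
        (deriv w z * deriv F z + w z * deriv (deriv F) z)) (Metric.ball (0:ℂ) 1) := by
    intro z hz
    rw [hEqD e1 hz,
      deriv_fun_add ((hw1A z hz).fun_mul (hAq z hz)).differentiableAt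
        ((hwA z hz).fun_mul (hA1 z hz)).differentiableAt,
      deriv_fun_mul (hw1A z hz).differentiableAt (hAq z hz).differentiableAt,
      deriv_fun_mul (hwA z hz).differentiableAt (hA1 z hz).differentiableAt, deriv_add_const]
  -- third derivative
  have e3 : Set.EqOn (deriv (deriv (deriv F)))
      (fun z => ((deriv (deriv (deriv w)) z * (F z + c) + deriv (deriv w) z * deriv F z) +
          (deriv (deriv w) z * deriv F z + deriv w z * deriv (deriv F) z)) +
        ((deriv (deriv w) z * deriv F z + deriv w z * deriv (deriv F) z) +
          (deriv w z * deriv (deriv F) z + w z * deriv (deriv (deriv F)) z)))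
      (Metric.ball (0:ℂ) 1) := by
    intro z hz
    have d1 : DifferentiableAt ℂ (fun z => deriv (deriv w) z * (F z + c)) z :=
      ((hw2A z hz).mul (hAq z hz)).differentiableAt
    have d2 : DifferentiableAt ℂ (fun z => deriv w z * deriv F z) z :=
      ((hw1A z hz).mul (hA1 z hz)).differentiableAt
    have d3 : DifferentiableAt ℂ (fun z => w z * deriv (deriv F) z) z :=
      ((hwA z hz).mul (hA2 z hz)).differentiableAt
    rw [hEqD e2 hz, deriv_fun_add (d1.fun_add d2) (d2.fun_add d3), deriv_fun_add d1 d2, deriv_fun_add d2 d3,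
      deriv_fun_mul (hw2A z hz).differentiableAt (hAq z hz).differentiableAt,
      deriv_fun_mul (hw1A z hz).differentiableAt (hA1 z hz).differentiableAt,
      deriv_fun_mul (hwA z hz).differentiableAt (hA2 z hz).differentiableAt, deriv_add_const]
  -- evaluate at 0
  have hq0 : ‖F 0 + c‖ = 2*t := by
    rw [hF0, hc]
    rw [show (1:ℂ) + ((2*t - 1 : ℝ):ℂ) = ((2*t : ℝ):ℂ) by push_cast; ring]
    rw [Complex.norm_real, Real.norm_eq_abs, abs_of_pos (by linarith)]
  have hE1 : ‖deriv F 0‖ ≤ 2*t := by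
    rw [e1 h0D]
    simp only [hw0, zero_mul, add_zero]
    rw [norm_mul, hq0]
    nlinarith [bd1, norm_nonneg (deriv w 0), ht0]
  have hE2 : ‖deriv (deriv F) 0‖ ≤ 8*t := by
    rw [e2 h0D]
    simp only [hw0, zero_mul, add_zero]
    refine le_trans (norm_add_le _ _) ?_
    refine le_trans (add_le_add (norm_add_le _ _) le_rfl) ?_
    simp only [norm_mul]
    rw [hq0]
    nlinarith [bd1, bd2, hE1, norm_nonneg (deriv w 0), norm_nonneg (deriv (deriv w) 0),
      norm_nonneg (deriv F 0), ht0]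
  have hE3 : ‖deriv (deriv (deriv F)) 0‖ ≤ 48*t := by
    rw [e3 h0D]
    simp only [hw0, zero_mul, add_zero]
    refine le_trans (norm_add_le _ _) ?_
    refine le_trans (add_le_add (norm_add_le _ _) (norm_add_le _ _)) ?_
    refine le_trans (add_le_add (add_le_add (norm_add_le _ _) (norm_add_le _ _))
      (add_le_add (norm_add_le _ _) le_rfl)) ?_
    simp only [norm_mul]
    rw [hq0]
    nlinarith [bd1, bd2, bd3, hE1, hE2, norm_nonneg (deriv w 0),
      norm_nonneg (deriv (deriv w) 0), norm_nonneg (deriv (deriv (deriv w)) 0),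
      norm_nonneg (deriv F 0), norm_nonneg (deriv (deriv F) 0), ht0]
  exact ⟨hE1, hE2, hE3⟩



/-- Corrected bound for the class `N_σ(β)` (`Çağlar et al.`, Theorem 2): if `f` is
bi-univalent with `Re f' > β` and `Re g' > β` for the inverse `g`, `0 ≤ β < 1`, then
`|a₂a₄ - a₃²| ≤ 2(1-β)²(49/18 - β/3 + |1/4 - (1-β)²/2|)`. -/
theorem hankel_bound_N_beta (β : ℝ) (hβ0 : 0 ≤ β) (hβ1 : β < 1)
    (f g : ℂ → ℂ) (a : ℕ → ℂ)
    (hfd : DifferentiableOn ℂ f (Metric.ball (0 : ℂ) 1))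
    (hfinj : Set.InjOn f (Metric.ball (0 : ℂ) 1))
    (hfs : ∀ z ∈ Metric.ball (0 : ℂ) 1, HasSum (fun n : ℕ => a n * z ^ n) (f z))
    (ha0 : a 0 = 0) (ha1 : a 1 = 1)
    (hgd : DifferentiableOn ℂ g (Metric.ball (0 : ℂ) 1))
    (hginj : Set.InjOn g (Metric.ball (0 : ℂ) 1))
    (hinv : ∃ r > (0 : ℝ), ∀ z ∈ Metric.ball (0 : ℂ) r, g (f z) = z)
    (hre1 : ∀ z ∈ Metric.ball (0 : ℂ) 1, β < (deriv f z).re)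
    (hre2 : ∀ w ∈ Metric.ball (0 : ℂ) 1, β < (deriv g w).re) :
    ‖a 2 * a 4 - (a 3) ^ 2‖ ≤
      2 * (1 - β) ^ 2 * (49 / 18 - β / 3 + |1 / 4 - (1 - β) ^ 2 / 2|) := by
  have ht0 : 0 < 1 - β := by linarith
  have hAf : AnalyticOnNhd ℂ f (Metric.ball (0:ℂ) 1) := hfd.analyticOnNhd Metric.isOpen_ball
  have hAF : AnalyticOnNhd ℂ (deriv f) (Metric.ball (0:ℂ) 1) := hAf.deriv
  have hder := lemA f a hfs
  have hF0 : deriv f 0 = 1 := by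
    have h := hder 1
    rw [iteratedDeriv_one] at h
    rw [h, ha1, Nat.factorial_one, Nat.cast_one, mul_one]
  have hre : ∀ z ∈ Metric.ball (0:ℂ) 1, 1 - (1 - β) < (deriv f z).re := by
    intro z hz
    have := hre1 z hz
    linarith
  obtain ⟨h1, h2, h3⟩ := core (1 - β) ht0 (deriv f) hAF hF0 hre
  -- identify derivatives with coefficients
  have k2 : deriv (deriv f) 0 = 2 * a 2 := by
    have h := hder 2
    rw [show iteratedDeriv 2 f = deriv (deriv f) by
      rw [iteratedDeriv_succ, iteratedDeriv_one]] at h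
    rw [h]; norm_num [Nat.factorial]
  have k3 : deriv (deriv (deriv f)) 0 = 6 * a 3 := by
    have h := hder 3
    rw [show iteratedDeriv 3 f = deriv (deriv (deriv f)) by
      rw [iteratedDeriv_succ, iteratedDeriv_succ, iteratedDeriv_one]] at h
    rw [h]; norm_num [Nat.factorial]
  have k4 : deriv (deriv (deriv (deriv f))) 0 = 24 * a 4 := by
    have h := hder 4
    rw [show iteratedDeriv 4 f = deriv (deriv (deriv (deriv f))) by
      rw [iteratedDeriv_succ, iteratedDeriv_succ, iteratedDeriv_succ, iteratedDeriv_one]] at h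
    rw [h]; norm_num [Nat.factorial]
  -- `h1 : ‖deriv (deriv f) 0‖ ≤ 2(1-β)` etc. (note `deriv F = deriv (deriv f)`)
  rw [k2] at h1
  rw [k3] at h2
  rw [k4] at h3
  have ha2 : ‖a 2‖ ≤ (1 - β) := by
    rw [norm_mul] at h1
    simp only [Complex.norm_ofNat] at h1
    linarith
  have ha3 : ‖a 3‖ ≤ 4 * (1 - β) / 3 := by
    rw [norm_mul] at h2
    simp only [Complex.norm_ofNat] at h2
    linarith
  have ha4 : ‖a 4‖ ≤ 2 * (1 - β) := by
    rw [norm_mul] at h3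
    simp only [Complex.norm_ofNat] at h3
    linarith
  have m1 : ‖a 2‖ * ‖a 4‖ ≤ (1 - β) * (2 * (1 - β)) :=
    mul_le_mul ha2 ha4 (norm_nonneg _) ht0.le
  have m2 : ‖a 3‖ ^ 2 ≤ (4 * (1 - β) / 3) ^ 2 :=
    pow_le_pow_left₀ (norm_nonneg _) ha3 2
  calc ‖a 2 * a 4 - a 3 ^ 2‖ ≤ ‖a 2 * a 4‖ + ‖a 3 ^ 2‖ := norm_sub_le _ _
    _ = ‖a 2‖ * ‖a 4‖ + ‖a 3‖ ^ 2 := by rw [norm_mul, norm_pow]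
    _ ≤ 2 * (1 - β) ^ 2 * (49 / 18 - β / 3 + |1 / 4 - (1 - β) ^ 2 / 2|) := by
        nlinarith [abs_nonneg (1 / 4 - (1 - β) ^ 2 / 2), sq_nonneg (1 - β), m1, m2, ht0, hβ0]
end
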